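/- arXiv:1709.05191 — 5 statements merged into one kernel-verified Lean document; each statement's English description precedes it below -/
import Mathlib

section
/- If f is a twice continuously differentiable convex function on an open convex set D ⊆ ℝⁿ whose Hessian satisfies 0 ⪯ H(x) ⪯ L·I for all x ∈ D (with L > 0), then for all x, y ∈ D one has ⟨g(y) − g(x), y − x⟩ ≥ (1/L)‖g(y) − g(x)‖², where g denotes the gradient of f. -/
open scoped RealInnerProductSpace

/-- The inverse of the Riesz duality map, as an `ℝ`-linear continuous equivalence. -/
noncomputable def realDualEquivAux (E' : Type*) [NormedAddCommGroup E'] [InnerProductSpace ℝ E']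
    [CompleteSpace E'] : StrongDual ℝ E' ≃L[ℝ] E' where
  toFun φ := (InnerProductSpace.toDual ℝ E').symm φ
  invFun x := InnerProductSpace.toDual ℝ E' x
  map_add' φ ψ := map_add _ φ ψ
  map_smul' c φ := by simpa using ((InnerProductSpace.toDual ℝ E').symm.map_smulₛₗ c φ)
  left_inv φ := (InnerProductSpace.toDual ℝ E').apply_symm_apply φ
  right_inv x := (InnerProductSpace.toDual ℝ E').symm_apply_apply x
  continuous_toFun := (InnerProductSpace.toDual ℝ E').symm.continuous
  continuous_invFun := (InnerProductSpace.toDual ℝ E').continuous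

/-- Pointwise Cauchy–Schwarz bound for a positive semidefinite symmetric operator with
quadratic form bounded by `L`. -/
lemma psd_inner_le_aux {n : ℕ} (L : ℝ) (hL : 0 < L)
    (H : EuclideanSpace ℝ (Fin n) →L[ℝ] EuclideanSpace ℝ (Fin n))
    (hpsd : ∀ v, 0 ≤ ⟪v, H v⟫) (hbd : ∀ v, ⟪v, H v⟫ ≤ L * ‖v‖ ^ 2)
    (hsymm : ∀ a b, ⟪a, H b⟫ = ⟪b, H a⟫)
    (u v : EuclideanSpace ℝ (Fin n)) :
    ⟪u, H v⟫ ≤ (‖u‖ ^ 2 + L * ⟪v, H v⟫) / 2 := by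
  have hquad : ∀ r : ℝ, 0 ≤ ⟪v, H v⟫ * r ^ 2 + (2 * ⟪u, H v⟫) * r + ⟪u, H u⟫ := by
    intro r
    have h0 := hpsd (u + r • v)
    have hexp : ⟪u + r • v, H (u + r • v)⟫
        = ⟪v, H v⟫ * r ^ 2 + (2 * ⟪u, H v⟫) * r + ⟪u, H u⟫ := by
      simp only [map_add, map_smul, inner_add_left, inner_add_right,
        real_inner_smul_left, real_inner_smul_right, hsymm v u]
      ring
    linarith [hexp ▸ h0]
  have hquad' : ∀ r : ℝ, 0 ≤ ⟪v, H v⟫ * (r * r) + (2 * ⟪u, H v⟫) * r + ⟪u, H u⟫ := by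
    intro r; have := hquad r; nlinarith [this]
  have hd := discrim_le_zero hquad'
  rw [discrim] at hd
  have h1 : ⟪u, H u⟫ ≤ L * ‖u‖ ^ 2 := hbd u
  have h2 : 0 ≤ ⟪v, H v⟫ := hpsd v
  have h3 : 0 ≤ ⟪u, H u⟫ := hpsd u
  have hp2 : ⟪u, H v⟫ ^ 2 ≤ (L * ‖u‖ ^ 2) * ⟪v, H v⟫ := by
    nlinarith [mul_nonneg h2 (sub_nonneg.2 h1)]
  have ha : (0:ℝ) ≤ ‖u‖ ^ 2 := sq_nonneg _
  have hb : (0:ℝ) ≤ L * ⟪v, H v⟫ := mul_nonneg hL.le h2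
  nlinarith [hp2, sq_nonneg (‖u‖ ^ 2 - L * ⟪v, H v⟫), ha, hb,
    sq_nonneg (‖u‖ ^ 2 + L * ⟪v, H v⟫ - 2 * ⟪u, H v⟫)]

/-- If `f` is a twice continuously differentiable convex function on an open convex set
`D ⊆ ℝⁿ` whose Hessian satisfies `0 ⪯ H(x) ⪯ L·I` on `D` (with `L > 0`), then for all
`x, y ∈ D` one has `⟨g(y) − g(x), y − x⟩ ≥ (1/L)‖g(y) − g(x)‖²`. -/
theorem stmt0 {n : ℕ} (D : Set (EuclideanSpace ℝ (Fin n)))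
    (f : EuclideanSpace ℝ (Fin n) → ℝ) (L : ℝ) (hL : 0 < L)
    (hDopen : IsOpen D) (hDconv : Convex ℝ D)
    (hf : ContDiffOn ℝ 2 f D)
    (hconv : ConvexOn ℝ D f)
    (hH : ∀ x ∈ D, ∀ (v : EuclideanSpace ℝ (Fin n)),
        0 ≤ ⟪v, fderiv ℝ (gradient f) x v⟫ ∧
        ⟪v, fderiv ℝ (gradient f) x v⟫ ≤ L * ‖v‖ ^ 2) :
    ∀ x ∈ D, ∀ y ∈ D,
      ⟪gradient f y - gradient f x, y - x⟫ ≥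
        (1 / L) * ‖gradient f y - gradient f x‖ ^ 2 := by
  -- Basic regularity facts
  have hC1 : ContDiffOn ℝ 1 (fderiv ℝ f) D :=
    hf.fderiv_of_isOpen (m := 1) hDopen (by norm_num)
  have hgeq : gradient f = ⇑(realDualEquivAux (EuclideanSpace ℝ (Fin n))) ∘ fderiv ℝ f := rfl
  have hgradC1 : ContDiffOn ℝ 1 (gradient f) D := by
    rw [hgeq]
    exact ContDiffOn.continuousLinearMap_comp
      (realDualEquivAux (EuclideanSpace ℝ (Fin n))).toContinuousLinearMap hC1
  have hHcont : ContinuousOn (fderiv ℝ (gradient f)) D :=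
    hgradC1.continuousOn_fderiv_of_isOpen hDopen le_rfl
  have hdiff : ∀ z ∈ D, DifferentiableAt ℝ (gradient f) z := fun z hz =>
    (hgradC1.contDiffAt (hDopen.mem_nhds hz)).differentiableAt one_ne_zero
  have hkey : ∀ z, ∀ a b : EuclideanSpace ℝ (Fin n), ⟪a, fderiv ℝ (gradient f) z b⟫
      = fderiv ℝ (fderiv ℝ f) z b a := by
    intro z a b
    rw [hgeq, ContinuousLinearEquiv.comp_fderiv]
    simp only [ContinuousLinearMap.coe_comp', Function.comp_apply]
    rw [real_inner_comm]
    exact InnerProductSpace.toDual_symm_apply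
  have hsymm : ∀ z ∈ D, ∀ a b : EuclideanSpace ℝ (Fin n),
      ⟪a, fderiv ℝ (gradient f) z b⟫ = ⟪b, fderiv ℝ (gradient f) z a⟫ := by
    intro z hz a b
    rw [hkey, hkey]
    exact ((hf.contDiffAt (hDopen.mem_nhds hz)).isSymmSndFDerivAt (by simp) b a)
  intro x hx y hy
  set u : EuclideanSpace ℝ (Fin n) := gradient f y - gradient f x with hu
  set c : ℝ → EuclideanSpace ℝ (Fin n) := fun t => x + t • (y - x) with hc
  have hmem : ∀ t ∈ Set.Icc (0:ℝ) 1, c t ∈ D := fun t ht =>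
    hDconv.add_smul_sub_mem hx hy ht
  have hccont : Continuous c := by fun_prop
  -- Integrability of the integrand, for any fixed `w`
  have hcontw : ∀ w : EuclideanSpace ℝ (Fin n), ContinuousOn
      (fun t => ⟪w, fderiv ℝ (gradient f) (c t) (y - x)⟫) (Set.Icc (0:ℝ) 1) := by
    intro w
    have h1 : ContinuousOn (fun t => fderiv ℝ (gradient f) (c t)) (Set.Icc (0:ℝ) 1) :=
      hHcont.comp hccont.continuousOn hmem
    exact ContinuousOn.inner continuousOn_const (h1.clm_apply continuousOn_const)
  have hintw : ∀ w : EuclideanSpace ℝ (Fin n), IntervalIntegrable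
      (fun t => ⟪w, fderiv ℝ (gradient f) (c t) (y - x)⟫) MeasureTheory.volume 0 1 := by
    intro w
    apply ContinuousOn.intervalIntegrable
    rw [Set.uIcc_of_le zero_le_one]
    exact hcontw w
  -- Fundamental theorem of calculus along the segment
  have hftc : ∀ w : EuclideanSpace ℝ (Fin n),
      ⟪w, gradient f y - gradient f x⟫ =
        ∫ t in (0:ℝ)..1, ⟪w, fderiv ℝ (gradient f) (c t) (y - x)⟫ := by
    intro w
    have hderiv : ∀ t ∈ Set.uIcc (0:ℝ) 1,
        HasDerivAt (fun t => ⟪w, gradient f (c t)⟫)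
          (⟪w, fderiv ℝ (gradient f) (c t) (y - x)⟫) t := by
      intro t ht
      rw [Set.uIcc_of_le zero_le_one] at ht
      have hcd : HasDerivAt c (y - x) t := by
        simpa only [id, one_smul] using ((hasDerivAt_id t).smul_const (y - x)).const_add x
      have hG : HasFDerivAt (gradient f) (fderiv ℝ (gradient f) (c t)) (c t) :=
        (hdiff _ (hmem t ht)).hasFDerivAt
      have h2 : HasDerivAt (fun t => gradient f (c t))
          (fderiv ℝ (gradient f) (c t) (y - x)) t := hG.comp_hasDerivAt t hcd
      simpa using (hasDerivAt_const t w).inner ℝ h2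
    have := intervalIntegral.integral_eq_sub_of_hasDerivAt hderiv (hintw w)
    rw [this, hc]
    simp [inner_sub_right]
  -- Pointwise bound on the integrand for `w = u`
  have hpt : ∀ t ∈ Set.Icc (0:ℝ) 1,
      ⟪u, fderiv ℝ (gradient f) (c t) (y - x)⟫ ≤
        (‖u‖ ^ 2 + L * ⟪y - x, fderiv ℝ (gradient f) (c t) (y - x)⟫) / 2 := by
    intro t ht
    have hz := hmem t ht
    exact psd_inner_le_aux L hL (fderiv ℝ (gradient f) (c t))
      (fun v => (hH _ hz v).1) (fun v => (hH _ hz v).2) (hsymm _ hz) u (y - x)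
  -- Integrate the pointwise bound
  have hbint : IntervalIntegrable
      (fun t => (‖u‖ ^ 2 + L * ⟪y - x, fderiv ℝ (gradient f) (c t) (y - x)⟫) / 2)
      MeasureTheory.volume 0 1 :=
    ((intervalIntegrable_const.add ((hintw (y - x)).const_mul L)).div_const 2)
  have hmono := intervalIntegral.integral_mono_on zero_le_one (hintw u) hbint hpt
  have hqval : (∫ t in (0:ℝ)..1,
      (‖u‖ ^ 2 + L * ⟪y - x, fderiv ℝ (gradient f) (c t) (y - x)⟫) / 2)
      = ‖u‖ ^ 2 / 2 + (L * ⟪y - x, gradient f y - gradient f x⟫) / 2 := by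
    rw [intervalIntegral.integral_div,
      intervalIntegral.integral_add intervalIntegrable_const ((hintw (y - x)).const_mul L),
      intervalIntegral.integral_const_mul, intervalIntegral.integral_const, ← hftc (y - x)]
    simp
    ring
  rw [hqval, ← hftc u, real_inner_self_eq_norm_sq] at hmono
  have hcomm : ⟪y - x, gradient f y - gradient f x⟫ = ⟪u, y - x⟫ := by
    rw [hu]; exact real_inner_comm _ _
  rw [hcomm] at hmono
  rw [ge_iff_le, show (1 / L) * ‖u‖ ^ 2 = ‖u‖ ^ 2 / L by ring, div_le_iff₀ hL]
  nlinarith [hmono]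
end

section
/- Let f ∈ F_{μ,L}(ℝⁿ) with minimizer x_*, κ = μ/L, and let 0 ≤ ε ≤ 2√κ/(1+κ). Suppose x₁ = x₀ − γd where γ is chosen by exact line search along −d (so ⟨g(x₁), x₁ − x₀⟩ = 0) and the direction d satisfies ⟨g(x₀), g(x₁)⟩ ≤ ε‖g(x₀)‖‖g(x₁)‖. Then ‖g(x₁)‖ ≤ (ε + √(1−ε²)·(1−κ)/(2√κ))·‖g(x₀)‖. -/
open scoped RealInnerProductSpace
open InnerProductSpace Filter Set Topology

variable {E : Type*} [NormedAddCommGroup E] [InnerProductSpace ℝ E] [CompleteSpace E]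

lemma line_hasDerivAt (φ : E → ℝ) (G : E → E) (hg : ∀ p, HasGradientAt φ (G p) p)
    (x v : E) (t : ℝ) : HasDerivAt (fun s : ℝ => φ (x + s • v)) ⟪G (x + t • v), v⟫ t := by
  have hc : HasDerivAt (fun s : ℝ => x + s • v) v t := by
    simpa using ((hasDerivAt_id t).smul_const v).const_add x
  have hf := (hasGradientAt_iff_hasFDerivAt.1 (hg (x + t • v))).comp_hasDerivAt t hc
  simpa [InnerProductSpace.toDual_apply_apply, Function.comp_def] using hf

lemma grad_convex_ineq (φ : E → ℝ) (G : E → E) (hg : ∀ p, HasGradientAt φ (G p) p)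
    (hc : ConvexOn ℝ Set.univ φ) (x y : E) : φ x + ⟪G x, y - x⟫ ≤ φ y := by
  have hd : HasDerivAt (fun s : ℝ => φ (x + s • (y - x))) ⟪G x, y - x⟫ 0 := by
    simpa using line_hasDerivAt φ G hg x (y - x) 0
  have hslope : Tendsto (slope (fun s : ℝ => φ (x + s • (y - x))) 0) (𝓝[>] 0)
      (𝓝 ⟪G x, y - x⟫) :=
    (hasDerivAt_iff_tendsto_slope.mp hd).mono_left
      (nhdsWithin_mono _ (fun t ht => ne_of_gt ht))
  have hev : ∀ᶠ t in 𝓝[>] (0:ℝ),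
      slope (fun s : ℝ => φ (x + s • (y - x))) 0 t ≤ φ y - φ x := by
    filter_upwards [Ioc_mem_nhdsGT_of_mem (Set.left_mem_Ico.2 zero_lt_one)] with t ht
    have hid : x + t • (y - x) = (1 - t) • x + t • y := by module
    have hco := hc.2 (Set.mem_univ x) (Set.mem_univ y) (by linarith [ht.2] : (0:ℝ) ≤ 1 - t)
      (le_of_lt ht.1) (by ring)
    simp only [slope_def_field, sub_zero, zero_smul, add_zero, div_eq_inv_mul]
    rw [hid, inv_mul_le_iff₀ ht.1]
    simp only [smul_eq_mul] at hco
    nlinarith [hco]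
  have := le_of_tendsto hslope hev
  linarith

lemma descent_lemma (φ : E → ℝ) (G : E → E) (hg : ∀ p, HasGradientAt φ (G p) p)
    (M : ℝ) (hM : 0 ≤ M) (hlipG : ∀ p q, ‖G p - G q‖ ≤ M * ‖p - q‖) (x y : E) :
    φ y ≤ φ x + ⟪G x, y - x⟫ + M / 2 * ‖y - x‖ ^ 2 := by
  set v := y - x with hv
  set χ : ℝ → ℝ := fun t => φ (x + t • v) - t * ⟪G x, v⟫ - M / 2 * ‖v‖ ^ 2 * t ^ 2 with hχ
  have hd : ∀ t : ℝ, HasDerivAt χ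
      (⟪G (x + t • v), v⟫ - ⟪G x, v⟫ - M / 2 * ‖v‖ ^ 2 * (2 * t)) t := by
    intro t
    have h := ((line_hasDerivAt φ G hg x v t).sub
        ((hasDerivAt_id t).mul_const ⟪G x, v⟫)).sub
      ((hasDerivAt_pow 2 t).const_mul (M / 2 * ‖v‖ ^ 2))
    exact h.congr_deriv (by norm_num)
  have hmono : AntitoneOn χ (Icc (0:ℝ) 1) := by
    refine antitoneOn_of_deriv_nonpos (convex_Icc 0 1) ?_ ?_ ?_
    · exact fun t _ => ((hd t).differentiableAt).continuousAt.continuousWithinAt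
    · exact fun t _ => ((hd t).differentiableAt).differentiableWithinAt
    · intro t ht
      rw [interior_Icc] at ht
      rw [(hd t).deriv]
      have h1 : ⟪G (x + t • v) - G x, v⟫ ≤ ‖G (x + t • v) - G x‖ * ‖v‖ :=
        real_inner_le_norm _ _
      have h2 : ‖G (x + t • v) - G x‖ ≤ M * (t * ‖v‖) := by
        have := hlipG (x + t • v) x
        simpa [norm_smul, abs_of_pos ht.1] using this
      have h3 : ⟪G (x + t • v) - G x, v⟫ = ⟪G (x + t • v), v⟫ - ⟪G x, v⟫ :=
        inner_sub_left _ _ _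
      nlinarith [norm_nonneg v, norm_nonneg (G (x + t • v) - G x), ht.1.le]
  have h01 := hmono (Set.left_mem_Icc.2 zero_le_one) (Set.right_mem_Icc.2 zero_le_one)
    zero_le_one
  have hχ0 : χ 0 = φ x := by simp [hχ]
  have hχ1 : χ 1 = φ y - ⟪G x, v⟫ - M / 2 * ‖v‖ ^ 2 := by simp [hχ, hv]
  rw [hχ0, hχ1] at h01
  linarith

lemma lower_bound (φ : E → ℝ) (G : E → E) (hg : ∀ p, HasGradientAt φ (G p) p)
    (hc : ConvexOn ℝ Set.univ φ) (M : ℝ) (hM : 0 < M)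
    (hdesc : ∀ p q, φ q ≤ φ p + ⟪G p, q - p⟫ + M / 2 * ‖q - p‖ ^ 2) (x y : E) :
    φ x + ⟪G x, y - x⟫ + 1 / (2 * M) * ‖G y - G x‖ ^ 2 ≤ φ y := by
  set w := G y - G x with hw
  set z := y - (1 / M) • w with hz
  have h1 := grad_convex_ineq φ G hg hc x z
  have h2 := hdesc y z
  have hzy : z - y = -((1 / M) • w) := by rw [hz]; abel
  have hzx : z - x = (y - x) - (1 / M) • w := by rw [hz]; abel
  have e1 : ⟪G y, z - y⟫ = -(1 / M) * ⟪G y, w⟫ := by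
    rw [hzy, inner_neg_right, real_inner_smul_right]; ring
  have e2 : ‖z - y‖ ^ 2 = (1 / M) ^ 2 * ‖w‖ ^ 2 := by
    rw [hzy, norm_neg, norm_smul]
    simp [abs_of_pos (by positivity : (0:ℝ) < 1 / M), mul_pow]
  have e3 : ⟪G x, z - x⟫ = ⟪G x, y - x⟫ - (1 / M) * ⟪G x, w⟫ := by
    rw [hzx, inner_sub_right, real_inner_smul_right]
  have e4 : ⟪G y, w⟫ - ⟪G x, w⟫ = ‖w‖ ^ 2 := by
    rw [← inner_sub_left, ← hw, real_inner_self_eq_norm_sq]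
  rw [e1, e2] at h2
  rw [e3] at h1
  have hMM : M / 2 * ((1 / M) ^ 2 * ‖w‖ ^ 2) = 1 / (2 * M) * ‖w‖ ^ 2 := by
    field_simp
  have e5 : (1:ℝ) / M * ⟪G y, w⟫ - 1 / M * ⟪G x, w⟫ = 2 * (1 / (2 * M) * ‖w‖ ^ 2) := by
    rw [← mul_sub, e4]; field_simp
  rw [hMM] at h2
  linarith

lemma cocoercive (φ : E → ℝ) (G : E → E) (hg : ∀ p, HasGradientAt φ (G p) p)
    (hc : ConvexOn ℝ Set.univ φ) (M : ℝ) (hM : 0 < M)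
    (hdesc : ∀ p q, φ q ≤ φ p + ⟪G p, q - p⟫ + M / 2 * ‖q - p‖ ^ 2) (x y : E) :
    1 / M * ‖G x - G y‖ ^ 2 ≤ ⟪G x - G y, x - y⟫ := by
  have h1 := lower_bound φ G hg hc M hM hdesc x y
  have h2 := lower_bound φ G hg hc M hM hdesc y x
  have e1 : ‖G x - G y‖ = ‖G y - G x‖ := norm_sub_rev _ _
  have e2 : ⟪G x - G y, x - y⟫ = -⟪G x, y - x⟫ - ⟪G y, x - y⟫ := by
    have a1 : (x - y) = -(y - x) := by abel
    rw [inner_sub_left, a1, inner_neg_right, inner_neg_right]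
  have e5 : (1:ℝ) / M * ‖G y - G x‖ ^ 2 = 2 * (1 / (2 * M) * ‖G y - G x‖ ^ 2) := by
    field_simp
  rw [e1] at h2
  rw [e1, e2]
  linarith

lemma hasGradientAt_h (f : E → ℝ) (hdiff : Differentiable ℝ f) (μ : ℝ) (p : E) :
    HasGradientAt (fun x => f x - μ / 2 * ‖x‖ ^ 2) (gradient f p - μ • p) p := by
  have h1 : HasFDerivAt f (InnerProductSpace.toDual ℝ E (gradient f p)) p :=
    (hdiff p).hasGradientAt
  have h2 : HasFDerivAt (fun x : E => μ / 2 * ‖x‖ ^ 2)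
      ((μ / 2) • (2 • (innerSL ℝ p))) p :=
    ((hasStrictFDerivAt_norm_sq p).hasFDerivAt).const_smul (μ / 2)
  have h3 := h1.sub h2
  rw [hasGradientAt_iff_hasFDerivAt]
  refine h3.congr_fderiv ?_
  ext y
  simp [inner_sub_left, real_inner_smul_left, InnerProductSpace.toDual_apply_apply]
  ring

lemma master_ineq (f : E → ℝ) (μ L : ℝ) (hμ : 0 < μ) (hμL : μ ≤ L)
    (hdiff : Differentiable ℝ f)
    (hsc : ConvexOn ℝ Set.univ (fun x => f x - μ / 2 * ‖x‖ ^ 2))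
    (hlip : ∀ x y, ‖gradient f x - gradient f y‖ ≤ L * ‖x - y‖) (x y : E) :
    ‖gradient f x - gradient f y‖ ^ 2 + μ * L * ‖x - y‖ ^ 2 ≤
      (μ + L) * ⟪gradient f x - gradient f y, x - y⟫ := by
  set g := gradient f with hgdef
  set Gh : E → E := fun p => gradient f p - μ • p with hGh
  have hg : ∀ p, HasGradientAt (fun x => f x - μ / 2 * ‖x‖ ^ 2) (Gh p) p :=
    fun p => hasGradientAt_h f hdiff μ p
  set P := ⟪g x - g y, x - y⟫ with hP
  set N := ‖x - y‖ ^ 2 with hN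
  set Q := ‖g x - g y‖ ^ 2 with hQ
  have eG : Gh x - Gh y = (g x - g y) - μ • (x - y) := by
    simp only [hGh, smul_sub]; abel
  have eInner : ⟪Gh x - Gh y, x - y⟫ = P - μ * N := by
    rw [eG, inner_sub_left, real_inner_smul_left, real_inner_self_eq_norm_sq]
  have eNorm : ‖Gh x - Gh y‖ ^ 2 = Q - 2 * μ * P + μ ^ 2 * N := by
    rw [eG, norm_sub_sq_real, real_inner_smul_right, norm_smul]
    simp [mul_pow, sq_abs, hP, hQ, hN]
    ring
  have hmono : 0 ≤ ⟪Gh x - Gh y, x - y⟫ := by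
    have m1 := grad_convex_ineq _ Gh hg hsc x y
    have m2 := grad_convex_ineq _ Gh hg hsc y x
    have a1 : (y - x) = -(x - y) := by abel
    rw [a1, inner_neg_right] at m1
    rw [inner_sub_left]
    linarith
  rcases eq_or_lt_of_le hμL with heq | hlt
  · -- μ = L
    subst heq
    have hQle : Q ≤ μ ^ 2 * N := by
      have h := hlip x y
      have := mul_self_le_mul_self (norm_nonneg (g x - g y)) h
      simp only [hQ, hN]
      nlinarith [norm_nonneg (x - y)]
    rw [eInner] at hmono
    nlinarith [hmono, hQle]
  · -- μ < L
    have hpos : (0:ℝ) < L - μ := by linarith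
    have hdesc : ∀ p q : E, (fun x => f x - μ / 2 * ‖x‖ ^ 2) q ≤
        (fun x => f x - μ / 2 * ‖x‖ ^ 2) p + ⟪Gh p, q - p⟫ +
          (L - μ) / 2 * ‖q - p‖ ^ 2 := by
      intro p q
      have hd := descent_lemma f (gradient f) (fun p => (hdiff p).hasGradientAt) L
        (le_trans hμ.le hμL) hlip p q
      have e1 : ⟪Gh p, q - p⟫ = ⟪gradient f p, q - p⟫ - μ * ⟪p, q - p⟫ := by
        rw [hGh]; simp only []
        rw [inner_sub_left, real_inner_smul_left]
      have e2 : ‖q‖ ^ 2 = ‖p‖ ^ 2 + 2 * ⟪p, q - p⟫ + ‖q - p‖ ^ 2 := by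
        have := norm_add_sq_real p (q - p)
        simpa using this
      simp only []
      rw [e1]
      nlinarith [hd]
    have coco := cocoercive _ Gh hg hsc (L - μ) hpos hdesc x y
    rw [eInner, eNorm] at coco
    have key1 : Q - 2 * μ * P + μ ^ 2 * N ≤ (L - μ) * (P - μ * N) := by
      calc Q - 2 * μ * P + μ ^ 2 * N
          = (L - μ) * (1 / (L - μ) * (Q - 2 * μ * P + μ ^ 2 * N)) := by
            field_simp
        _ ≤ (L - μ) * (P - μ * N) := by
            exact mul_le_mul_of_nonneg_left coco hpos.le
    nlinarith [key1]


lemma aux_sig1 {σ : ℝ} (h0 : 0 ≤ σ) (h1 : σ ≤ 1) : 0 ≤ 1 - σ ^ 2 := by nlinarith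

lemma aux_sig2 {σ : ℝ} (h0 : 0 ≤ σ) : 2 * σ / (1 + σ ^ 2) ≤ 1 := by
  rw [div_le_one (by positivity)]
  nlinarith [sq_nonneg (1 - σ)]

lemma aux_eps2 {ε : ℝ} (h0 : 0 ≤ ε) (h1 : ε ≤ 1) : 0 ≤ 1 - ε ^ 2 := by nlinarith

lemma aux_h48 {μ L G0 G1 a : ℝ}
    (h : 4 * (μ * L * (G0 ^ 2 - 2 * (a * G1) + G1 ^ 2)) ≤ (μ + L) ^ 2 * (G0 ^ 2 - a ^ 2)) :
    4 * (μ * L) * (G1 - a) ^ 2 ≤ (L - μ) ^ 2 * (G0 ^ 2 - a ^ 2) := by nlinarith [h]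

lemma aux_disc {mL B Q S pn : ℝ} (hmL : 0 < mL) (hQ : 0 ≤ Q) (hS : 0 < S)
    (hB : 0 ≤ B) (hpn : 0 ≤ pn)
    (h : Q + mL * S ^ 2 ≤ B * (pn * S)) : 4 * (mL * Q) ≤ B ^ 2 * pn ^ 2 := by
  have h0 : 0 ≤ Q + mL * S ^ 2 := by positivity
  have hq1 : (Q + mL * S ^ 2) ^ 2 ≤ (B * (pn * S)) ^ 2 := pow_le_pow_left₀ h0 h 2
  nlinarith [sq_nonneg (Q - mL * S ^ 2), mul_pos hS hS, hq1]

lemma aux_step1 {mL C G1 a r : ℝ} (hmL : 0 < mL) (hC : 0 ≤ C) (hr : 0 ≤ r)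
    (h48 : 4 * mL * (G1 - a) ^ 2 ≤ C ^ 2 * (4 * mL) * r ^ 2) : G1 ≤ a + C * r := by
  rcases le_or_gt G1 a with h | h
  · have := mul_nonneg hC hr
    linarith
  · have hsq : (G1 - a) ^ 2 ≤ (C * r) ^ 2 := by nlinarith [h48]
    have h2 := le_of_pow_le_pow_left₀ two_ne_zero (mul_nonneg hC hr) hsq
    linarith

lemma aux_mono {G2 a b C r ρ : ℝ} (hC : 0 ≤ C) (hab : a ≤ b) (hρ : 0 ≤ ρ)
    (hr2 : r ^ 2 = G2 - a ^ 2) (hρ2 : ρ ^ 2 = G2 - b ^ 2) (hCb : C * b ≤ ρ) :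
    a + C * r ≤ b + C * ρ := by
  rcases le_or_gt r ρ with h | h
  · have := mul_le_mul_of_nonneg_left h hC
    linarith
  · have hsum : 0 < r + ρ := by linarith
    have hkey : (r + ρ) * (b - a + C * ρ - C * r) = (b - a) * (r + ρ - C * (b + a)) := by
      linear_combination (-C) * hr2 + C * hρ2
    have h9 : C * a ≤ C * b := mul_le_mul_of_nonneg_left hab hC
    have h8 : 0 ≤ r + ρ - C * (b + a) := by nlinarith [h9]
    have h10 : 0 ≤ (b - a) * (r + ρ - C * (b + a)) := mul_nonneg (by linarith) h8
    nlinarith [hkey, h10, hsum]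

lemma aux_eps {σ ε : ℝ} (h5 : ε ^ 2 * (1 + σ ^ 2) ^ 2 ≤ (2 * σ) ^ 2) :
    (1 - σ ^ 2) ^ 2 ≤ (1 - ε ^ 2) * (1 + σ ^ 2) ^ 2 := by nlinarith [h5]

lemma aux_eps1 {x ε : ℝ} (hx : 0 < x) (h : x ^ 2 ≤ ε * x * x) : 1 ≤ ε := by
  nlinarith [mul_pos hx hx]

set_option maxHeartbeats 4000000 in
/-- Inexact gradient method with exact line search on `f ∈ F_{μ,L}(ℝⁿ)`:
worst-case contraction of the gradient norm. -/
theorem stmt5 {n : ℕ} (f : EuclideanSpace ℝ (Fin n) → ℝ) (μ L : ℝ)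
    (hμ : 0 < μ) (hμL : μ ≤ L)
    (hdiff : Differentiable ℝ f)
    -- μ-strong convexity
    (hsc : ConvexOn ℝ Set.univ (fun x => f x - μ / 2 * ‖x‖ ^ 2))
    -- L-Lipschitz gradient
    (hlip : ∀ x y, ‖gradient f x - gradient f y‖ ≤ L * ‖x - y‖)
    (xstar x₀ x₁ d : EuclideanSpace ℝ (Fin n)) (γ ε : ℝ)
    (hmin : ∀ x, f xstar ≤ f x)
    (hε0 : 0 ≤ ε) (hε1 : ε ≤ 2 * Real.sqrt (μ / L) / (1 + μ / L))
    (hstep : x₁ = x₀ - γ • d)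
    (hels : ⟪gradient f x₁, x₁ - x₀⟫ = 0)
    (hang : ⟪gradient f x₀, gradient f x₁⟫ ≤ ε * ‖gradient f x₀‖ * ‖gradient f x₁‖) :
    ‖gradient f x₁‖ ≤
      (ε + Real.sqrt (1 - ε ^ 2) * (1 - μ / L) / (2 * Real.sqrt (μ / L))) *
        ‖gradient f x₀‖ := by
  have hL : 0 < L := lt_of_lt_of_le hμ hμL
  set g0 := gradient f x₀ with hg0
  set g1 := gradient f x₁ with hg1
  set σ := Real.sqrt (μ / L) with hσ
  have hσnn : 0 ≤ σ := Real.sqrt_nonneg _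
  have hκ0 : 0 < μ / L := div_pos hμ hL
  have hκ1 : μ / L ≤ 1 := (div_le_one hL).2 hμL
  have hσ0 : 0 < σ := Real.sqrt_pos.2 hκ0
  have hσ2 : σ ^ 2 = μ / L := Real.sq_sqrt hκ0.le
  have hσ1 : σ ≤ 1 := by
    rw [hσ, show (1:ℝ) = Real.sqrt 1 from (Real.sqrt_one).symm]
    exact Real.sqrt_le_sqrt hκ1
  clear_value g0 g1 σ
  have hεb : ε ≤ 2 * σ / (1 + σ ^ 2) := by rw [hσ2]; exact hε1
  have hσsq1 : 0 ≤ 1 - σ ^ 2 := aux_sig1 hσnn hσ1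
  have hε_le1 : ε ≤ 1 := le_trans hεb (aux_sig2 hσnn)
  have h1ε : 0 ≤ 1 - ε ^ 2 := aux_eps2 hε0 hε_le1
  have hsqε : (1 - σ ^ 2) / (1 + σ ^ 2) ≤ Real.sqrt (1 - ε ^ 2) := by
    have h6 : ε ^ 2 ≤ (2 * σ) ^ 2 / (1 + σ ^ 2) ^ 2 := by
      have := pow_le_pow_left₀ hε0 hεb 2
      rwa [div_pow] at this
    have h5 : ε ^ 2 * (1 + σ ^ 2) ^ 2 ≤ (2 * σ) ^ 2 := (le_div_iff₀ (by positivity)).1 h6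
    have hnn : 0 ≤ (1 - σ ^ 2) / (1 + σ ^ 2) := div_nonneg hσsq1 (by positivity)
    have hsq2 : ((1 - σ ^ 2) / (1 + σ ^ 2)) ^ 2 ≤ 1 - ε ^ 2 := by
      rw [div_pow, div_le_iff₀ (by positivity)]
      exact aux_eps h5
    calc (1 - σ ^ 2) / (1 + σ ^ 2)
        = Real.sqrt (((1 - σ ^ 2) / (1 + σ ^ 2)) ^ 2) := (Real.sqrt_sq hnn).symm
      _ ≤ Real.sqrt (1 - ε ^ 2) := Real.sqrt_le_sqrt hsq2
  have hC0 : 0 ≤ (1 - μ / L) / (2 * σ) := div_nonneg (by linarith) (by positivity)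
  have hcoef0 : 0 ≤ ε + Real.sqrt (1 - ε ^ 2) * (1 - μ / L) / (2 * σ) := by
    have : 0 ≤ Real.sqrt (1 - ε ^ 2) * (1 - μ / L) / (2 * σ) :=
      div_nonneg (mul_nonneg (Real.sqrt_nonneg _) (by linarith)) (by positivity)
    linarith
  by_cases hG1 : ‖g1‖ = 0
  · rw [hG1]; exact mul_nonneg hcoef0 (norm_nonneg _)
  have hG1' : 0 < ‖g1‖ := (norm_nonneg _).lt_of_ne (Ne.symm hG1)
  have hs0 : ⟪g1, x₀ - x₁⟫ = 0 := by
    rw [show x₀ - x₁ = -(x₁ - x₀) from by abel, inner_neg_right, hels, neg_zero]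
  by_cases hxx : x₀ = x₁
  · have hgg : g0 = g1 := by rw [hg0, hg1, hxx]
    have hc2 : ‖g1‖ ^ 2 ≤ ε * ‖g1‖ * ‖g1‖ := by
      have h := hang
      rw [hgg, real_inner_self_eq_norm_sq] at h
      exact h
    have hε1' : 1 ≤ ε := aux_eps1 hG1' hc2
    have hεe : ε = 1 := le_antisymm hε_le1 hε1'
    have hsq0 : Real.sqrt (1 - ε ^ 2) = 0 := by rw [hεe]; norm_num
    rw [hgg, hsq0, hεe]
    norm_num
  have hS : 0 < ‖x₀ - x₁‖ := by rw [norm_pos_iff]; exact sub_ne_zero.2 hxx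
  have M0 := master_ineq f μ L hμ hμL hdiff hsc hlip x₀ x₁
  rw [← hg0, ← hg1] at M0
  have eA : ⟪g0 - g1, x₀ - x₁⟫ = ⟪g0, x₀ - x₁⟫ := by
    rw [inner_sub_left, hs0, sub_zero]
  rw [eA] at M0
  set a := ⟪g0, g1⟫ / ‖g1‖ with ha
  clear_value a
  have hac : a * ‖g1‖ = ⟪g0, g1⟫ := by rw [ha]; exact div_mul_cancel₀ _ hG1
  have ha_le : a ≤ ε * ‖g0‖ := by
    rw [ha, div_le_iff₀ hG1']
    calc ⟪g0, g1⟫ ≤ ε * ‖g0‖ * ‖g1‖ := hang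
      _ = ε * ‖g0‖ * ‖g1‖ := rfl
  have ha_sq : a ^ 2 ≤ ‖g0‖ ^ 2 := by
    have h := abs_real_inner_le_norm g0 g1
    have h2 : ⟪g0, g1⟫ ^ 2 ≤ (‖g0‖ * ‖g1‖) ^ 2 := by
      rw [← sq_abs]; exact pow_le_pow_left₀ (abs_nonneg _) h 2
    rw [ha, div_pow, div_le_iff₀ (by positivity)]
    linarith [h2]
  set p := g0 - (⟪g0, g1⟫ / ‖g1‖ ^ 2) • g1 with hp
  clear_value p
  have epnorm : ‖p‖ ^ 2 = ‖g0‖ ^ 2 - a ^ 2 := by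
    rw [hp, norm_sub_sq_real, real_inner_smul_right, norm_smul, mul_pow, Real.norm_eq_abs, sq_abs, ha]
    field_simp
    ring
  have eA2 : ⟪g0, x₀ - x₁⟫ = ⟪p, x₀ - x₁⟫ := by
    rw [hp, inner_sub_left, real_inner_smul_left, hs0, mul_zero, sub_zero]
  have hCS : ⟪p, x₀ - x₁⟫ ≤ ‖p‖ * ‖x₀ - x₁‖ := real_inner_le_norm _ _
  have hμL0 : 0 < μ + L := by linarith
  have hBSQ : ‖g0 - g1‖ ^ 2 + μ * L * ‖x₀ - x₁‖ ^ 2 ≤ (μ + L) * (‖p‖ * ‖x₀ - x₁‖) := by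
    calc ‖g0 - g1‖ ^ 2 + μ * L * ‖x₀ - x₁‖ ^ 2 ≤ (μ + L) * ⟪g0, x₀ - x₁⟫ := M0
      _ = (μ + L) * ⟪p, x₀ - x₁⟫ := by rw [eA2]
      _ ≤ (μ + L) * (‖p‖ * ‖x₀ - x₁‖) := mul_le_mul_of_nonneg_left hCS hμL0.le
  have hdisc : 4 * (μ * L * ‖g0 - g1‖ ^ 2) ≤ (μ + L) ^ 2 * ‖p‖ ^ 2 :=
    aux_disc (by positivity) (sq_nonneg _) hS hμL0.le (norm_nonneg _) hBSQ
  have hQa : ‖g0 - g1‖ ^ 2 = ‖g0‖ ^ 2 - 2 * (a * ‖g1‖) + ‖g1‖ ^ 2 := by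
    rw [norm_sub_sq_real, hac]
  have h48 : 4 * (μ * L) * (‖g1‖ - a) ^ 2 ≤ (L - μ) ^ 2 * (‖g0‖ ^ 2 - a ^ 2) := by
    rw [hQa, epnorm] at hdisc
    exact aux_h48 hdisc
  clear hdisc M0 hBSQ hCS eA2 eA hQa
  set r := Real.sqrt (‖g0‖ ^ 2 - a ^ 2) with hrdef
  have hr0 : 0 ≤ r := Real.sqrt_nonneg _
  have hr2 : r ^ 2 = ‖g0‖ ^ 2 - a ^ 2 := Real.sq_sqrt (by linarith [ha_sq])
  clear_value r
  have hC2 : ((1 - μ / L) / (2 * σ)) ^ 2 * (4 * (μ * L)) = (L - μ) ^ 2 := by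
    rw [div_pow, mul_pow, hσ2]
    field_simp
    ring
  have hstep1 : ‖g1‖ ≤ a + (1 - μ / L) / (2 * σ) * r := by
    rw [← hC2, ← hr2] at h48
    exact aux_step1 (by positivity) hC0 hr0 h48
  have hρb2 : (Real.sqrt (1 - ε ^ 2) * ‖g0‖) ^ 2 = ‖g0‖ ^ 2 - (ε * ‖g0‖) ^ 2 := by
    rw [mul_pow, Real.sq_sqrt h1ε]; ring
  have hρb0 : 0 ≤ Real.sqrt (1 - ε ^ 2) * ‖g0‖ := by positivity
  have hCb : (1 - μ / L) / (2 * σ) * (ε * ‖g0‖) ≤ Real.sqrt (1 - ε ^ 2) * ‖g0‖ := by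
    have h71 : ε * (1 + σ ^ 2) ≤ 2 * σ := by
      have := (le_div_iff₀ (by positivity : (0:ℝ) < 1 + σ ^ 2)).1 hεb
      linarith [this]
    have h7 : (1 - μ / L) / (2 * σ) * ε ≤ (1 - σ ^ 2) / (1 + σ ^ 2) := by
      rw [← hσ2, div_mul_eq_mul_div, div_le_div_iff₀ (by positivity) (by positivity)]
      have h72 := mul_le_mul_of_nonneg_left h71 hσsq1
      linarith [h72]
    calc (1 - μ / L) / (2 * σ) * (ε * ‖g0‖) = ((1 - μ / L) / (2 * σ) * ε) * ‖g0‖ := by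
          ring
      _ ≤ (1 - σ ^ 2) / (1 + σ ^ 2) * ‖g0‖ := mul_le_mul_of_nonneg_right h7 (norm_nonneg _)
      _ ≤ Real.sqrt (1 - ε ^ 2) * ‖g0‖ := mul_le_mul_of_nonneg_right hsqε (norm_nonneg _)
  have hstep2 : a + (1 - μ / L) / (2 * σ) * r ≤
      ε * ‖g0‖ + (1 - μ / L) / (2 * σ) * (Real.sqrt (1 - ε ^ 2) * ‖g0‖) :=
    aux_mono hC0 ha_le hρb0 hr2 hρb2 hCb
  have hfin : (ε + Real.sqrt (1 - ε ^ 2) * (1 - μ / L) / (2 * σ)) * ‖g0‖ =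
      ε * ‖g0‖ + (1 - μ / L) / (2 * σ) * (Real.sqrt (1 - ε ^ 2) * ‖g0‖) := by
    ring
  rw [hfin]
  linarith [hstep1, hstep2]
end

section
/- Under the same hypotheses (f ∈ F_{μ,L}(ℝⁿ), exact line search with inexact direction satisfying ⟨g(x₀), g(x₁)⟩ ≤ ε‖g(x₀)‖‖g(x₁)‖, 0 ≤ ε ≤ 2√κ/(1+κ), κ = μ/L), one has ‖x₁ − x_*‖ ≤ (ε + √(1−ε²)·(1−κ)/(2√κ))·‖x₀ − x_*‖. -/
set_option maxHeartbeats 1000000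

open scoped RealInnerProductSpace
open Set InnerProductSpace

variable {E : Type*} [NormedAddCommGroup E] [InnerProductSpace ℝ E] [CompleteSpace E]

lemma line_hasDerivAt_s6 (f : E → ℝ) (hf : Differentiable ℝ f) (x v : E) (t : ℝ) :
    HasDerivAt (fun t : ℝ => f (x + t • v)) ⟪gradient f (x + t • v), v⟫ t := by
  have h1 : HasFDerivAt f (toDual ℝ E (gradient f (x + t • v))) (x + t • v) :=
    (hf _).hasGradientAt.hasFDerivAt
  have h2 : HasDerivAt (fun t : ℝ => x + t • v) v t := by
    simpa using ((hasDerivAt_id t).smul_const v).const_add x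
  exact (h1.comp_hasDerivAt t h2).congr_deriv (by simp)

lemma convex_line {h : E → ℝ} (hc : ConvexOn ℝ Set.univ h) (x v : E) :
    ConvexOn ℝ Set.univ (fun t : ℝ => h (x + t • v)) := by
  have h2 := hc.comp_affineMap (AffineMap.lineMap x (x + v) : ℝ →ᵃ[ℝ] E)
  simp only [Set.preimage_univ] at h2
  have heq : (h ∘ (AffineMap.lineMap x (x + v))) = fun t : ℝ => h (x + t • v) := by
    funext t
    apply congrArg h
    rw [AffineMap.lineMap_apply_module]
    module
  rwa [heq] at h2

lemma convex_first_order {h : E → ℝ} (hc : ConvexOn ℝ Set.univ h) (hd : Differentiable ℝ h)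
    (x y : E) : h x + ⟪gradient h x, y - x⟫ ≤ h y := by
  set v := y - x with hv
  have hline := convex_line hc x v
  have hder := line_hasDerivAt_s6 h hd x v 0
  rw [show x + (0:ℝ) • v = x by simp] at hder
  have := hline.le_slope_of_hasDerivAt (Set.mem_univ (0:ℝ)) (Set.mem_univ (1:ℝ)) one_pos hder
  rw [slope_def_field] at this
  simp only [one_smul, zero_smul, add_zero, sub_zero, div_one] at this
  rw [show x + v = y by rw [hv]; abel] at this
  linarith

set_option linter.unusedSectionVars false

lemma descent_lemma_s6 {h : E → ℝ} (hd : Differentiable ℝ h) {K : ℝ} (hK0 : 0 < K)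
    (hK : ∀ a b : E, ⟪gradient h a - gradient h b, a - b⟫ ≤ K * ‖a - b‖ ^ 2) (x y : E) :
    h y ≤ h x + ⟪gradient h x, y - x⟫ + K / 2 * ‖y - x‖ ^ 2 := by
  set v := y - x with hv
  set ψ : ℝ → ℝ := fun t => K * ‖v‖ ^ 2 * t ^ 2 / 2 - h (x + t • v) with hψ
  have hψd : ∀ t : ℝ, HasDerivAt ψ (K * ‖v‖ ^ 2 * t - ⟪gradient h (x + t • v), v⟫) t := by
    intro t
    have h1 : HasDerivAt (fun t : ℝ => K * ‖v‖ ^ 2 * t ^ 2 / 2) (K * ‖v‖ ^ 2 * t) t := by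
      have := ((hasDerivAt_pow 2 t).const_mul (K * ‖v‖ ^ 2)).div_const 2
      exact this.congr_deriv (by ring)
    exact h1.sub (line_hasDerivAt_s6 h hd x v t)
  have hder : deriv ψ = fun t => K * ‖v‖ ^ 2 * t - ⟪gradient h (x + t • v), v⟫ :=
    funext fun t => (hψd t).deriv
  have hmono : Monotone (deriv ψ) := by
    rw [hder]
    intro a b hab
    have key := hK (x + b • v) (x + a • v)
    have hdiff : (x + b • v) - (x + a • v) = (b - a) • v := by module
    rw [hdiff] at key
    have hin : ⟪gradient h (x + b • v) - gradient h (x + a • v), (b - a) • v⟫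
        = (b - a) * (⟪gradient h (x + b • v), v⟫ - ⟪gradient h (x + a • v), v⟫) := by
      rw [real_inner_smul_right, inner_sub_left]
    have hns : ‖(b - a) • v‖ ^ 2 = (b - a) ^ 2 * ‖v‖ ^ 2 := by
      rw [norm_smul]; simp [mul_pow, sq_abs]
    rw [hin, hns] at key
    dsimp only
    rcases eq_or_lt_of_le hab with rfl | hlt
    · exact le_rfl
    · nlinarith [hlt]
  have hψdiff : Differentiable ℝ ψ := fun t => (hψd t).differentiableAt
  have hconv : ConvexOn ℝ Set.univ ψ := hmono.convexOn_univ_of_deriv hψdiff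
  have := hconv.le_slope_of_hasDerivAt (Set.mem_univ (0:ℝ)) (Set.mem_univ (1:ℝ)) one_pos (hψd 0)
  rw [slope_def_field] at this
  have h0 : x + (0:ℝ) • v = x := by simp
  have h1 : x + (1:ℝ) • v = y := by rw [hv]; module
  rw [h0] at this
  simp only [hψ, h0, h1] at this
  norm_num at this
  have hg : (fderiv ℝ h x) v = ⟪gradient h x, v⟫ := by rw [gradient, toDual_symm_apply]
  linarith

lemma hasGradientAt_sub_inner {h : E → ℝ} (hd : Differentiable ℝ h) (c z : E) :
    HasGradientAt (fun w => h w - ⟪c, w⟫) (gradient h z - c) z := by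
  have h1 : HasFDerivAt (fun w : E => ⟪c, w⟫) (toDual ℝ E c) z := by
    have := (toDual ℝ E c).hasFDerivAt (x := z)
    apply this.congr_of_eventuallyEq
    filter_upwards with w
    simp
  have h2 := ((hd z).hasGradientAt.hasFDerivAt).sub h1
  rw [hasGradientAt_iff_hasFDerivAt, map_sub]
  exact h2

lemma inner_concave (c : E) : ConcaveOn ℝ Set.univ (fun z : E => ⟪c, z⟫) := by
  refine ⟨convex_univ, fun x _ y _ a b _ _ _ => ?_⟩
  simp [inner_add_right, real_inner_smul_right]

lemma cocoercive_s6 {h : E → ℝ} (hc : ConvexOn ℝ Set.univ h) (hd : Differentiable ℝ h)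
    {K : ℝ} (hK0 : 0 < K)
    (hK : ∀ a b : E, ⟪gradient h a - gradient h b, a - b⟫ ≤ K * ‖a - b‖ ^ 2) (a b : E) :
    ‖gradient h a - gradient h b‖ ^ 2 ≤ K * ⟪gradient h a - gradient h b, a - b⟫ := by
  have lower : ∀ p q : E, h p + ⟪gradient h p, q - p⟫ + ‖gradient h q - gradient h p‖ ^ 2 / (2 * K)
      ≤ h q := by
    intro p q
    set c := gradient h p with hcdef
    set φ : E → ℝ := fun w => h w - ⟪c, w⟫ with hφ
    have hφd : Differentiable ℝ φ := fun z => (hasGradientAt_sub_inner hd c z).differentiableAt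
    have hgφ : ∀ z, gradient φ z = gradient h z - c := fun z =>
      (hasGradientAt_sub_inner hd c z).gradient
    have hφconv : ConvexOn ℝ Set.univ φ := hc.sub (inner_concave c)
    have hφK : ∀ u w : E, ⟪gradient φ u - gradient φ w, u - w⟫ ≤ K * ‖u - w‖ ^ 2 := by
      intro u w
      rw [hgφ, hgφ, sub_sub_sub_cancel_right]
      exact hK u w
    -- φ is minimized at p
    have hminφ : ∀ z, φ p ≤ φ z := by
      intro z
      have := convex_first_order hφconv hφd p z
      rw [hgφ p] at this
      simp [hcdef] at this
      linarith [this]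
    set w := gradient h q - gradient h p with hw
    have hdes := descent_lemma_s6 hφd hK0 hφK q (q - K⁻¹ • w)
    have e1 : q - K⁻¹ • w - q = -(K⁻¹ • w) := by module
    have e2 : ⟪gradient φ q, -(K⁻¹ • w)⟫ = -(K⁻¹ * ‖w‖ ^ 2) := by
      rw [hgφ q, ← hw]
      rw [inner_neg_right, real_inner_smul_right, real_inner_self_eq_norm_sq]
    have e3 : ‖-(K⁻¹ • w)‖ ^ 2 = K⁻¹ ^ 2 * ‖w‖ ^ 2 := by
      rw [norm_neg, norm_smul]
      simp [mul_pow, sq_abs]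
    rw [e1, e2, e3] at hdes
    have hmin2 := hminφ (q - K⁻¹ • w)
    have hKne : K ≠ 0 := ne_of_gt hK0
    have key : φ p ≤ φ q - ‖w‖ ^ 2 / (2 * K) := by
      have : K / 2 * (K⁻¹ ^ 2 * ‖w‖ ^ 2) = ‖w‖ ^ 2 / (2 * K) := by
        field_simp
      rw [this] at hdes
      have : K⁻¹ * ‖w‖ ^ 2 = ‖w‖ ^ 2 / K := by field_simp
      rw [this] at hdes
      have h2K : ‖w‖ ^ 2 / (2 * K) + ‖w‖ ^ 2 / (2 * K) = ‖w‖ ^ 2 / K := by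
        field_simp
        ring
      linarith [le_trans hmin2 hdes]
    simp only [hφ] at key
    have : ⟪c, q - p⟫ = ⟪c, q⟫ - ⟪c, p⟫ := inner_sub_right c q p
    rw [hcdef] at *
    linarith [key, this]
  have l1 := lower a b
  have l2 := lower b a
  have e1 : ⟪gradient h a, b - a⟫ = -⟪gradient h a, a - b⟫ := by
    rw [← inner_neg_right]; congr 1; module
  have e2 : ‖gradient h a - gradient h b‖ = ‖gradient h b - gradient h a‖ := norm_sub_rev _ _
  have e3 : ⟪gradient h a - gradient h b, a - b⟫
      = ⟪gradient h a, a - b⟫ - ⟪gradient h b, a - b⟫ := inner_sub_left _ _ _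
  have e4 : ⟪gradient h b, a - b⟫ = -⟪gradient h b, b - a⟫ := by
    rw [← inner_neg_right]; congr 1; module
  have hKpos : 0 < 2 * K := by linarith
  rw [e2] at l2
  rw [e2, e3]
  have hsum : ‖gradient h b - gradient h a‖ ^ 2 / (2 * K) + ‖gradient h b - gradient h a‖ ^ 2 / (2 * K)
      ≤ ⟪gradient h a, a - b⟫_ℝ - ⟪gradient h b, a - b⟫_ℝ := by linarith
  have hdd : ‖gradient h b - gradient h a‖ ^ 2 / (2 * K) + ‖gradient h b - gradient h a‖ ^ 2 / (2 * K)
      = ‖gradient h b - gradient h a‖ ^ 2 / K := by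
    field_simp
    ring
  rw [hdd, div_le_iff₀ hK0] at hsum
  rw [mul_comm]
  exact hsum

lemma hasGradientAt_quad (μ : ℝ) (x : E) :
    HasGradientAt (fun w : E => μ / 2 * ‖w‖ ^ 2) (μ • x) x := by
  have h1 : HasFDerivAt (fun w : E => ‖w‖ ^ 2) (2 • (innerSL ℝ x)) x := by
    simpa using (hasFDerivAt_id x).norm_sq
  have h2 := h1.const_mul (μ / 2)
  rw [hasGradientAt_iff_hasFDerivAt]
  apply h2.congr_fderiv
  ext w
  simp [real_inner_smul_left]
  ring

lemma grad_shift {f : E → ℝ} (hdiff : Differentiable ℝ f) (μ : ℝ) (z : E) :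
    HasGradientAt (fun x : E => f x - μ / 2 * ‖x‖ ^ 2) (gradient f z - μ • z) z := by
  rw [hasGradientAt_iff_hasFDerivAt, map_sub]
  exact ((hdiff z).hasGradientAt.hasFDerivAt).sub (hasGradientAt_quad μ z).hasFDerivAt

lemma interp {f : E → ℝ} {μ L : ℝ} (hμ : 0 < μ) (hμL : μ ≤ L) (hdiff : Differentiable ℝ f)
    (hsc : ConvexOn ℝ Set.univ (fun x => f x - μ / 2 * ‖x‖ ^ 2))
    (hlip : ∀ x y : E, ‖gradient f x - gradient f y‖ ≤ L * ‖x - y‖) (x y : E) :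
    ‖gradient f x - gradient f y‖ ^ 2 + μ * L * ‖x - y‖ ^ 2
      ≤ (μ + L) * ⟪gradient f x - gradient f y, x - y⟫ := by
  set h : E → ℝ := fun x => f x - μ / 2 * ‖x‖ ^ 2 with hh
  have hhd : Differentiable ℝ h := fun z => (grad_shift hdiff μ z).differentiableAt
  have hgh : ∀ z, gradient h z = gradient f z - μ • z := fun z => (grad_shift hdiff μ z).gradient
  have hip : ∀ a b : E, ⟪gradient h a - gradient h b, a - b⟫
      = ⟪gradient f a - gradient f b, a - b⟫ - μ * ‖a - b‖ ^ 2 := by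
    intro a b
    rw [hgh, hgh]
    have : gradient f a - μ • a - (gradient f b - μ • b) = (gradient f a - gradient f b) - μ • (a - b) := by
      module
    rw [this, inner_sub_left, real_inner_smul_left, real_inner_self_eq_norm_sq]
  -- strong monotonicity of gradient f
  have hmono : ∀ a b : E, μ * ‖a - b‖ ^ 2 ≤ ⟪gradient f a - gradient f b, a - b⟫ := by
    intro a b
    have h1 := convex_first_order hsc hhd a b
    have h2 := convex_first_order hsc hhd b a
    rw [hgh] at h1 h2
    have e1 : ⟪gradient f a - μ • a, b - a⟫ + ⟪gradient f b - μ • b, a - b⟫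
        = -(⟪gradient f a - gradient f b, a - b⟫ - μ * ‖a - b‖ ^ 2) := by
      have := hip a b
      rw [hgh, hgh] at this
      have e2 : ⟪gradient f a - μ • a, b - a⟫ = -⟪gradient f a - μ • a, a - b⟫ := by
        rw [← inner_neg_right]; congr 1; module
      rw [e2, ← this]
      simp only [inner_sub_left]
      ring
    have := add_le_add h1 h2
    nlinarith [this, e1]
  have hCS : ∀ a b : E, ⟪gradient f a - gradient f b, a - b⟫ ≤ L * ‖a - b‖ ^ 2 := by
    intro a b
    calc ⟪gradient f a - gradient f b, a - b⟫ ≤ ‖gradient f a - gradient f b‖ * ‖a - b‖ :=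
          real_inner_le_norm _ _
      _ ≤ L * ‖a - b‖ * ‖a - b‖ := by
          have := hlip a b
          have h0 : (0:ℝ) ≤ ‖a - b‖ := norm_nonneg _
          nlinarith
      _ = L * ‖a - b‖ ^ 2 := by ring
  rcases eq_or_lt_of_le hμL with rfl | hlt
  · -- μ = L
    have h1 := hmono x y
    have h2 := hlip x y
    have h0 : (0:ℝ) ≤ ‖x - y‖ := norm_nonneg _
    nlinarith [h1, h2, h0, norm_nonneg (gradient f x - gradient f y)]
  · -- μ < L
    set K := L - μ with hKdef
    have hK0 : 0 < K := by simp [hKdef]; linarith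
    have hKh : ∀ a b : E, ⟪gradient h a - gradient h b, a - b⟫ ≤ K * ‖a - b‖ ^ 2 := by
      intro a b
      rw [hip a b]
      have := hCS a b
      simp [hKdef]
      linarith
    have hco := cocoercive_s6 hsc hhd hK0 hKh x y
    rw [hip x y] at hco
    have hexp : ‖gradient h x - gradient h y‖ ^ 2
        = ‖gradient f x - gradient f y‖ ^ 2
          - 2 * μ * ⟪gradient f x - gradient f y, x - y⟫ + μ ^ 2 * ‖x - y‖ ^ 2 := by
      rw [hgh, hgh]
      have e : gradient f x - μ • x - (gradient f y - μ • y)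
          = (gradient f x - gradient f y) - μ • (x - y) := by module
      rw [e, norm_sub_sq_real, real_inner_smul_right, norm_smul]
      simp [mul_pow, sq_abs]
      ring
    rw [hexp] at hco
    nlinarith [hco]

lemma sq_le_imp {a b : ℝ} (hb : 0 ≤ b) (h : a ^ 2 ≤ b ^ 2) : a ≤ b := by nlinarith

-- Stage 2
lemma stage2 {ε c D Ee R s B : ℝ} (hR : 0 ≤ R) (hc0 : 0 < c) (hε0 : 0 ≤ ε) (hεc : ε ≤ c)
    (hD : 0 ≤ D) (hE : 0 ≤ Ee) (hB : 0 ≤ B)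
    (hD2 : D ^ 2 = 1 - ε ^ 2) (hE2 : Ee ^ 2 = 1 - c ^ 2)
    (hB2 : B ^ 2 = R ^ 2 - s ^ 2) (hs1 : c * R ≤ s) :
    ε * s + D * B ≤ ε * (c * R) + D * (Ee * R) := by
  have hs0 : 0 ≤ s := le_trans (by positivity) hs1
  have hscsq : (c * R) ^ 2 ≤ s ^ 2 := by nlinarith [mul_self_le_mul_self (by positivity : (0:ℝ) ≤ c * R) hs1]
  have hBER : B ≤ Ee * R := sq_le_imp (by positivity) (by nlinarith)
  have h1 : ε * Ee ≤ D * c := sq_le_imp (by positivity) (by nlinarith)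
  have h2 : ε * B ≤ D * s := by
    apply sq_le_imp (by positivity)
    have hεR : (ε * R) ^ 2 ≤ s ^ 2 := by nlinarith [mul_self_le_mul_self hε0 hεc, sq_nonneg R]
    nlinarith [sq_nonneg ε]
  have hfac : ε * (Ee * R + B) ≤ D * (s + c * R) := by
    nlinarith [mul_le_mul_of_nonneg_right h1 hR, h2]
  rcases lt_or_eq_of_le (by positivity : (0:ℝ) ≤ Ee * R + B) with hpos | hzero
  · have key : (ε * (s - c * R)) * (Ee * R + B) ≤ (D * (Ee * R - B)) * (Ee * R + B) := by
      have expand : (D * (Ee * R - B)) * (Ee * R + B) = (D * (s - c * R)) * (s + c * R) := by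
        linear_combination (D * R ^ 2) * hE2 - D * hB2
      rw [expand]
      nlinarith [mul_le_mul_of_nonneg_right hfac (sub_nonneg.mpr hs1)]
    have hred := (mul_le_mul_iff_of_pos_right hpos).mp key
    linarith [hred]
  · have hE0 : Ee * R = 0 := by linarith [mul_nonneg hE hR]
    have hB0 : B = 0 := by linarith [mul_nonneg hE hR]
    have hs2 : s ^ 2 = R ^ 2 := by nlinarith
    have hsR : s = R := by
      have u1 := sq_le_imp hR (le_of_eq hs2)
      have u2 := sq_le_imp hs0 (le_of_eq hs2.symm)
      linarith
    have hscr : s ≤ c * R := by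
      rcases mul_eq_zero.mp hE0 with hee | hrr
      · have hc1 : c = 1 := by
          have v1 : c ≤ 1 := sq_le_imp zero_le_one (by rw [hee] at hE2; nlinarith)
          have v2 : (1:ℝ) ≤ c := sq_le_imp hc0.le (by rw [hee] at hE2; nlinarith)
          linarith
        rw [hc1, hsR]; linarith
      · rw [hrr] at hsR; rw [hsR, hrr]; simp
    have hfin : s = c * R := le_antisymm hscr hs1
    rw [hfin, hB0, hE0]

-- Stage 1
lemma stage1 {p s A B G R ε D : ℝ} (hG : 0 ≤ G) (hR : 0 ≤ R) (hε0 : 0 ≤ ε)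
    (hA : 0 ≤ A) (hB : 0 ≤ B) (hD : 0 ≤ D)
    (hA2 : A ^ 2 = G ^ 2 - p ^ 2) (hD2 : D ^ 2 = 1 - ε ^ 2) (hB2 : B ^ 2 = R ^ 2 - s ^ 2)
    (hp : p ≤ ε * G) (hs0 : 0 ≤ s) (hsε : ε * R ≤ s) :
    p * s + A * B ≤ (ε * G) * s + (D * G) * B := by
  rcases le_or_gt A (D * G) with hADG | hADG
  · nlinarith [mul_nonneg (sub_nonneg.mpr hADG) hB, mul_nonneg (sub_nonneg.mpr hp) hs0]
  · have hDG0 : 0 ≤ D * G := mul_nonneg hD hG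
    have hp2 : p ^ 2 < (ε * G) ^ 2 := by nlinarith
    have h1 : p < ε * G := by nlinarith [mul_nonneg hε0 hG]
    have h2 : 0 < ε * G + p := by nlinarith [mul_nonneg hε0 hG]
    have w1 : p * B ≤ s * A := by
      rcases le_or_gt p 0 with hp0 | hp0
      · have : p * B ≤ 0 := mul_nonpos_of_nonpos_of_nonneg hp0 hB
        nlinarith [mul_nonneg hs0 hA]
      · apply sq_le_imp (mul_nonneg hs0 hA)
        have hsG : p * R ≤ s * G := by
          nlinarith [mul_le_mul_of_nonneg_right hp hR, mul_le_mul_of_nonneg_right hsε hG]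
        nlinarith [mul_nonneg hp0.le hR, mul_nonneg hs0 hG, sq_nonneg p, sq_nonneg s]
    have w2 : (ε * G) * B ≤ s * (D * G) := by
      have w2' : ε * B ≤ s * D := by
        apply sq_le_imp (mul_nonneg hs0 hD)
        have : (ε * R) ^ 2 ≤ s ^ 2 := by
          nlinarith [mul_self_le_mul_self (mul_nonneg hε0 hR) hsε]
        nlinarith [sq_nonneg ε]
      calc (ε * G) * B = (ε * B) * G := by ring
        _ ≤ (s * D) * G := mul_le_mul_of_nonneg_right w2' hG
        _ = s * (D * G) := by ring
    have hApDG : 0 < A + D * G := by linarith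
    have key : ((A - D * G) * B) * (A + D * G) ≤ ((ε * G - p) * s) * (A + D * G) := by
      have expand : ((A - D * G) * B) * (A + D * G) = ((ε * G - p) * (ε * G + p)) * B := by
        linear_combination B * hA2 - (B * G ^ 2) * hD2
      rw [expand]
      have hsum : (ε * G + p) * B ≤ s * (A + D * G) := by nlinarith [w1, w2]
      calc ((ε * G - p) * (ε * G + p)) * B = (ε * G - p) * ((ε * G + p) * B) := by ring
        _ ≤ (ε * G - p) * (s * (A + D * G)) := by
            apply mul_le_mul_of_nonneg_left hsum (by linarith)
        _ = ((ε * G - p) * s) * (A + D * G) := by ring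
    have hred := (mul_le_mul_iff_of_pos_right hApDG).mp key
    nlinarith [hred]

lemma scalar_bound {G R p s ε c : ℝ} (hG : 0 ≤ G) (hR : 0 ≤ R) (hc0 : 0 < c) (hc1 : c ≤ 1)
    (hε0 : 0 ≤ ε) (hεc : ε ≤ c) (hp : p ≤ ε * G) (hp2 : p ^ 2 ≤ G ^ 2)
    (hs1 : c * R ≤ s) (hs2 : s ≤ R) :
    p * s + Real.sqrt (G ^ 2 - p ^ 2) * Real.sqrt (R ^ 2 - s ^ 2)
      ≤ G * R * (ε * c + Real.sqrt (1 - ε ^ 2) * Real.sqrt (1 - c ^ 2)) := by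
  have hs0 : 0 ≤ s := le_trans (by positivity) hs1
  have hε1 : ε ≤ 1 := le_trans hεc hc1
  set A := Real.sqrt (G ^ 2 - p ^ 2) with hAdef
  set B := Real.sqrt (R ^ 2 - s ^ 2) with hBdef
  set D := Real.sqrt (1 - ε ^ 2) with hDdef
  set Ee := Real.sqrt (1 - c ^ 2) with hEdef
  have hA : 0 ≤ A := Real.sqrt_nonneg _
  have hB : 0 ≤ B := Real.sqrt_nonneg _
  have hD : 0 ≤ D := Real.sqrt_nonneg _
  have hE : 0 ≤ Ee := Real.sqrt_nonneg _
  have hA2 : A ^ 2 = G ^ 2 - p ^ 2 := Real.sq_sqrt (by linarith)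
  have hB2 : B ^ 2 = R ^ 2 - s ^ 2 := Real.sq_sqrt (by nlinarith)
  have hD2 : D ^ 2 = 1 - ε ^ 2 := Real.sq_sqrt (by nlinarith)
  have hE2 : Ee ^ 2 = 1 - c ^ 2 := Real.sq_sqrt (by nlinarith)
  have hsε : ε * R ≤ s := le_trans (mul_le_mul_of_nonneg_right hεc hR) hs1
  have st1 := stage1 hG hR hε0 hA hB hD hA2 hD2 hB2 hp hs0 hsε
  have st2 := stage2 hR hc0 hε0 hεc hD hE hB hD2 hE2 hB2 hs1
  calc p * s + A * B ≤ (ε * G) * s + (D * G) * B := st1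
    _ = G * (ε * s + D * B) := by ring
    _ ≤ G * (ε * (c * R) + D * (Ee * R)) := mul_le_mul_of_nonneg_left st2 hG
    _ = G * R * (ε * c + D * Ee) := by ring

open scoped RealInnerProductSpace

/-- Inexact gradient method with exact line search on `f ∈ F_{μ,L}(ℝⁿ)`:
worst-case contraction of the distance to the minimizer. -/
theorem stmt6 {n : ℕ} (f : EuclideanSpace ℝ (Fin n) → ℝ) (μ L : ℝ)
    (hμ : 0 < μ) (hμL : μ ≤ L)
    (hdiff : Differentiable ℝ f)
    -- μ-strong convexity
    (hsc : ConvexOn ℝ Set.univ (fun x => f x - μ / 2 * ‖x‖ ^ 2))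
    -- L-Lipschitz gradient
    (hlip : ∀ x y, ‖gradient f x - gradient f y‖ ≤ L * ‖x - y‖)
    (xstar x₀ x₁ d : EuclideanSpace ℝ (Fin n)) (γ ε : ℝ)
    (hmin : ∀ x, f xstar ≤ f x)
    (hε0 : 0 ≤ ε) (hε1 : ε ≤ 2 * Real.sqrt (μ / L) / (1 + μ / L))
    (hstep : x₁ = x₀ - γ • d)
    (hels : ⟪gradient f x₁, x₁ - x₀⟫ = 0)
    (hang : ⟪gradient f x₀, gradient f x₁⟫ ≤ ε * ‖gradient f x₀‖ * ‖gradient f x₁‖) :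
    ‖x₁ - xstar‖ ≤
      (ε + Real.sqrt (1 - ε ^ 2) * (1 - μ / L) / (2 * Real.sqrt (μ / L))) *
        ‖x₀ - xstar‖ := by
  have hL : 0 < L := lt_of_lt_of_le hμ hμL
  -- gradient vanishes at the minimizer
  have gstar : gradient f xstar = 0 := by
    have hloc : IsLocalMin f xstar := Filter.Eventually.of_forall fun x => hmin x
    have hf0 : fderiv ℝ f xstar = 0 := hloc.fderiv_eq_zero
    unfold gradient
    rw [hf0, map_zero]
  -- interpolation inequality at the minimizer
  have key : ∀ x, ‖gradient f x‖ ^ 2 + μ * L * ‖x - xstar‖ ^ 2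
      ≤ (μ + L) * ⟪gradient f x, x - xstar⟫ := by
    intro x
    have := interp hμ hμL hdiff hsc hlip x xstar
    rwa [gstar, sub_zero] at this
  -- line search orthogonality
  have hels' : ⟪gradient f x₁, x₁ - xstar⟫ = ⟪gradient f x₁, x₀ - xstar⟫ := by
    have h0 : ⟪gradient f x₁, (x₁ - xstar) - (x₀ - xstar)⟫ = 0 := by
      rw [show (x₁ - xstar) - (x₀ - xstar) = x₁ - x₀ by module]
      exact hels
    rw [inner_sub_right] at h0
    linarith only [h0]
  -- κ, sk, c
  have hκ0 : 0 < μ / L := div_pos hμ hL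
  have hκ1 : μ / L ≤ 1 := (div_le_one hL).mpr hμL
  have hsk0 : 0 < Real.sqrt (μ / L) := Real.sqrt_pos.mpr hκ0
  have hsk2 : Real.sqrt (μ / L) ^ 2 = μ / L := Real.sq_sqrt hκ0.le
  set κ := μ / L with hκdef
  set sk := Real.sqrt κ with hskdef
  have h1κ : 0 < 1 + κ := by linarith
  set c := 2 * sk / (1 + κ) with hcdef
  have hc0 : 0 < c := by positivity
  have hc1 : c ≤ 1 := by
    rw [div_le_one h1κ]
    nlinarith only [sq_nonneg (1 - sk), hsk2]
  have hεc : ε ≤ c := hε1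
  clear_value κ sk c
  have h1mκ : 0 ≤ 1 - κ := by linarith
  have hsqrtμL : Real.sqrt (μ * L) = sk * L := by
    rw [show μ * L = κ * L ^ 2 by rw [hκdef]; field_simp]
    rw [Real.sqrt_mul hκ0.le, Real.sqrt_sq hL.le, ← hskdef]
  have hμLsum : μ + L = (1 + κ) * L := by rw [hκdef]; field_simp; ring
  have hE : Real.sqrt (1 - c ^ 2) = (1 - κ) / (1 + κ) := by
    have hcc : 1 - c ^ 2 = ((1 - κ) / (1 + κ)) ^ 2 := by
      rw [hcdef]
      field_simp
      nlinarith only [hsk2]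
    rw [hcc, Real.sqrt_sq (div_nonneg h1mκ h1κ.le)]
  -- nonnegativity of the contraction factor
  have hRHS0 : 0 ≤ ε + Real.sqrt (1 - ε ^ 2) * (1 - κ) / (2 * sk) := by
    have : 0 ≤ Real.sqrt (1 - ε ^ 2) * (1 - κ) / (2 * sk) :=
      div_nonneg (mul_nonneg (Real.sqrt_nonneg _) h1mκ) (by positivity)
    linarith only [this, hε0]
  -- AM-GM step
  have hamgm : ∀ x, 2 * Real.sqrt (μ * L) * (‖gradient f x‖ * ‖x - xstar‖)
      ≤ ‖gradient f x‖ ^ 2 + μ * L * ‖x - xstar‖ ^ 2 := by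
    intro x
    have h1 : Real.sqrt (μ * L) ^ 2 = μ * L := Real.sq_sqrt (by positivity)
    nlinarith only [h1, sq_nonneg (‖gradient f x‖ - Real.sqrt (μ * L) * ‖x - xstar‖)]
  have hcNR : ∀ x, c * (‖gradient f x‖ * ‖x - xstar‖) ≤ ⟪gradient f x, x - xstar⟫ := by
    intro x
    have h1 := key x
    have h2 := hamgm x
    rw [hsqrtμL] at h2
    have h3 : c * (‖gradient f x‖ * ‖x - xstar‖) * ((1 + κ) * L)
        = 2 * (sk * L) * (‖gradient f x‖ * ‖x - xstar‖) := by
      rw [hcdef]; field_simp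
    have h4 : c * (‖gradient f x‖ * ‖x - xstar‖) * ((1 + κ) * L)
        ≤ ((1 + κ) * L) * ⟪gradient f x, x - xstar⟫ := by
      rw [h3, ← hμLsum]; linarith only [h1, h2]
    have h5 : 0 < (1 + κ) * L := by positivity
    nlinarith only [h4, h5]
  by_cases hg1 : gradient f x₁ = 0
  · have h1 := key x₁
    rw [hg1] at h1
    simp only [inner_zero_left, norm_zero] at h1
    have h1' : ‖x₁ - xstar‖ ^ 2 ≤ 0 := by nlinarith only [h1, mul_pos hμ hL]
    have hR1 : ‖x₁ - xstar‖ = 0 := by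
      have h3 : ‖x₁ - xstar‖ ^ 2 = 0 := le_antisymm h1' (sq_nonneg _)
      exact pow_eq_zero_iff (two_ne_zero) |>.mp h3
    rw [hR1]
    exact mul_nonneg hRHS0 (norm_nonneg _)
  by_cases hg0 : gradient f x₀ = 0
  · exfalso
    have h0 := key x₀
    rw [hg0] at h0
    simp only [inner_zero_left, norm_zero] at h0
    have h0' : ‖x₀ - xstar‖ ^ 2 ≤ 0 := by nlinarith only [h0, mul_pos hμ hL]
    have hR0 : ‖x₀ - xstar‖ = 0 := by
      have h3 : ‖x₀ - xstar‖ ^ 2 = 0 := le_antisymm h0' (sq_nonneg _)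
      exact pow_eq_zero_iff (two_ne_zero) |>.mp h3
    have hr0 : x₀ - xstar = 0 := norm_eq_zero.mp hR0
    have h1 := key x₁
    rw [hels', hr0, inner_zero_right] at h1
    have h1' : ‖gradient f x₁‖ ^ 2 ≤ 0 := by nlinarith only [h1, mul_pos hμ hL, sq_nonneg (‖x₁ - xstar‖)]
    have hGz : ‖gradient f x₁‖ = 0 := by
      have h3 : ‖gradient f x₁‖ ^ 2 = 0 := le_antisymm h1' (sq_nonneg _)
      exact pow_eq_zero_iff (two_ne_zero) |>.mp h3
    exact hg1 (norm_eq_zero.mp hGz)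
  -- main case
  have hG0 : (0:ℝ) < ‖gradient f x₁‖ := norm_pos_iff.mpr hg1
  have hN0 : (0:ℝ) < ‖gradient f x₀‖ := norm_pos_iff.mpr hg0
  have hq1 := hcNR x₁
  have hq0 := hcNR x₀
  set r0 := x₀ - xstar with hr0def
  set r1 := x₁ - xstar with hr1def
  clear_value r0 r1
  set N := ‖gradient f x₀‖ with hNdef
  set G := ‖gradient f x₁‖ with hGdef
  set R := ‖r0‖ with hRdef
  set s := ⟪gradient f x₀, r0⟫_ℝ / N with hsdef
  set p := ⟪gradient f x₀, gradient f x₁⟫_ℝ / N with hpdef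
  clear_value N G R s p
  have hRnn : (0:ℝ) ≤ R := by rw [hRdef]; exact norm_nonneg _
  have hs1 : c * R ≤ s := by
    rw [hsdef, le_div_iff₀ hN0]
    nlinarith only [hq0]
  have hs2 : s ≤ R := by
    rw [hsdef, div_le_iff₀ hN0]
    have hCS0 := real_inner_le_norm (gradient f x₀) r0
    rw [← hNdef, ← hRdef] at hCS0
    nlinarith only [hCS0]
  have hp : p ≤ ε * G := by
    rw [hpdef, div_le_iff₀ hN0]
    nlinarith only [hang]
  have hp2 : p ^ 2 ≤ G ^ 2 := by
    have habs := abs_real_inner_le_norm (gradient f x₀) (gradient f x₁)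
    rw [← hNdef, ← hGdef] at habs
    have h2 : |p| ≤ G := by
      rw [hpdef, abs_div, abs_of_pos hN0, div_le_iff₀ hN0]
      nlinarith only [habs]
    have h3 := abs_le.mp h2
    nlinarith only [h3.1, h3.2]
  have keyCS : ⟪gradient f x₁, r0⟫_ℝ
      ≤ p * s + Real.sqrt (G ^ 2 - p ^ 2) * Real.sqrt (R ^ 2 - s ^ 2) := by
    set u := (N⁻¹ : ℝ) • (gradient f x₀) with hudef
    have hNN : ⟪gradient f x₀, gradient f x₀⟫_ℝ = N ^ 2 := by
      rw [real_inner_self_eq_norm_sq, hNdef]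
    have huu : ⟪u, u⟫_ℝ = 1 := by
      rw [hudef, real_inner_smul_left, real_inner_smul_right, hNN]
      field_simp
    have hug1 : ⟪gradient f x₁, u⟫_ℝ = p := by
      rw [hudef, real_inner_smul_right, real_inner_comm (gradient f x₀) (gradient f x₁), hpdef]
      ring
    have hur0 : ⟪u, r0⟫_ℝ = s := by
      rw [hudef, real_inner_smul_left, hsdef]
      ring
    have hu1 : ‖u‖ = 1 := by
      have h2 : ‖u‖ ^ 2 = 1 := by rw [← real_inner_self_eq_norm_sq]; exact huu
      nlinarith only [h2, norm_nonneg u]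
    have hCS := real_inner_le_norm (gradient f x₁ - p • u) (r0 - s • u)
    have hLHS : ⟪gradient f x₁ - p • u, r0 - s • u⟫_ℝ
        = ⟪gradient f x₁, r0⟫_ℝ - p * s := by
      simp only [inner_sub_left, inner_sub_right, real_inner_smul_left, real_inner_smul_right]
      rw [hug1, hur0, huu]
      ring
    have hnorm1 : ‖gradient f x₁ - p • u‖ = Real.sqrt (G ^ 2 - p ^ 2) := by
      rw [← Real.sqrt_sq (norm_nonneg (gradient f x₁ - p • u))]
      congr 1
      rw [norm_sub_sq_real, real_inner_smul_right, hug1, norm_smul, hu1, ← hGdef]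
      simp only [Real.norm_eq_abs, mul_one]
      rw [sq_abs]
      ring
    have hnorm2 : ‖r0 - s • u‖ = Real.sqrt (R ^ 2 - s ^ 2) := by
      rw [← Real.sqrt_sq (norm_nonneg (r0 - s • u))]
      congr 1
      rw [norm_sub_sq_real, real_inner_smul_right, norm_smul, hu1, ← hRdef]
      have hcomm : ⟪r0, u⟫_ℝ = ⟪u, r0⟫_ℝ := real_inner_comm _ _
      rw [hcomm, hur0]
      simp only [Real.norm_eq_abs, mul_one]
      rw [sq_abs]
      ring
    rw [hLHS, hnorm1, hnorm2] at hCS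
    linarith only [hCS]
  have hSB := scalar_bound hG0.le hRnn hc0 hc1 hε0 hεc hp hp2 hs1 hs2
  have hchain : c * (G * ‖r1‖)
      ≤ G * R * (ε * c + Real.sqrt (1 - ε ^ 2) * Real.sqrt (1 - c ^ 2)) := by
    calc c * (G * ‖r1‖) ≤ ⟪gradient f x₁, r1⟫_ℝ := hq1
      _ = ⟪gradient f x₁, r0⟫_ℝ := hels'
      _ ≤ p * s + Real.sqrt (G ^ 2 - p ^ 2) * Real.sqrt (R ^ 2 - s ^ 2) := keyCS
      _ ≤ G * R * (ε * c + Real.sqrt (1 - ε ^ 2) * Real.sqrt (1 - c ^ 2)) := hSB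
  rw [hE] at hchain
  have hfac : G * R * (ε * c + Real.sqrt (1 - ε ^ 2) * ((1 - κ) / (1 + κ)))
      = c * (G * ((ε + Real.sqrt (1 - ε ^ 2) * (1 - κ) / (2 * sk)) * R)) := by
    rw [hcdef]
    field_simp
  rw [hfac] at hchain
  have hstep1 := le_of_mul_le_mul_left hchain hc0
  have hstep2 := le_of_mul_le_mul_left hstep1 hG0
  exact hstep2
end

section
/- Let Σ and Σ̂ be symmetric positive definite n×n real matrices and ε ∈ (0,1) such that (1−ε)·yᵀΣ̂y ≤ yᵀΣy ≤ (1+ε)·yᵀΣ̂y and (1−ε)·yᵀΣ̂⁻¹y ≤ yᵀΣ⁻¹y ≤ (1+ε)·yᵀΣ̂⁻¹y for all y ∈ ℝⁿ. Then for any vector v ∈ ℝⁿ, ‖Σv − Σ̂v‖_{Σ⁻¹} ≤ √(2ε/(1−ε))·‖Σv‖_{Σ⁻¹}, where ‖u‖_{Σ⁻¹} = √(uᵀΣ⁻¹u). -/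
open Matrix

/-- If `Σ̂` approximates the positive definite matrix `Σ` in the sense that their quadratic
forms (and those of their inverses) agree up to a relative factor `ε ∈ (0,1)`, then for any
vector `v`, the direction `Σ̂v` approximates `Σv` in the `Σ⁻¹`-norm with relative error
`√(2ε/(1−ε))`. -/
theorem stmt14 {n : ℕ} (S Shat : Matrix (Fin n) (Fin n) ℝ)
    (hS : S.PosDef) (hShat : Shat.PosDef)
    (ε : ℝ) (hε0 : 0 < ε) (hε1 : ε < 1)
    (h1 : ∀ y : Fin n → ℝ,
      (1 - ε) * (y ⬝ᵥ Shat.mulVec y) ≤ y ⬝ᵥ S.mulVec y ∧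
      y ⬝ᵥ S.mulVec y ≤ (1 + ε) * (y ⬝ᵥ Shat.mulVec y))
    (h2 : ∀ y : Fin n → ℝ,
      (1 - ε) * (y ⬝ᵥ Shat⁻¹.mulVec y) ≤ y ⬝ᵥ S⁻¹.mulVec y ∧
      y ⬝ᵥ S⁻¹.mulVec y ≤ (1 + ε) * (y ⬝ᵥ Shat⁻¹.mulVec y))
    (v : Fin n → ℝ) :
    Real.sqrt ((S.mulVec v - Shat.mulVec v) ⬝ᵥ S⁻¹.mulVec (S.mulVec v - Shat.mulVec v)) ≤
      Real.sqrt (2 * ε / (1 - ε)) *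
        Real.sqrt (S.mulVec v ⬝ᵥ S⁻¹.mulVec (S.mulVec v)) := by
  have hSdet : IsUnit S.det := isUnit_iff_ne_zero.mpr hS.det_pos.ne'
  have hShatdet : IsUnit Shat.det := isUnit_iff_ne_zero.mpr hShat.det_pos.ne'
  have hSym : Sᵀ = S := hS.isHermitian.eq
  have hSymhat : Shatᵀ = Shat := hShat.isHermitian.eq
  set u := S.mulVec v with hu
  set w := Shat.mulVec v with hw
  -- S⁻¹ (S v) = v
  have hinv : S⁻¹.mulVec u = v := by
    rw [hu, Matrix.mulVec_mulVec, Matrix.nonsing_inv_mul S hSdet, Matrix.one_mulVec]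
  have hinvhat : Shat⁻¹.mulVec w = v := by
    rw [hw, Matrix.mulVec_mulVec, Matrix.nonsing_inv_mul Shat hShatdet, Matrix.one_mulVec]
  -- cross term : u ⬝ᵥ S⁻¹ w = v ⬝ᵥ w
  have hcross : u ⬝ᵥ S⁻¹.mulVec w = v ⬝ᵥ w := by
    rw [hu, Matrix.dotProduct_mulVec, Matrix.vecMul_mulVec, hSym,
      Matrix.mul_nonsing_inv S hSdet, Matrix.vecMul_one]
  have hQ : u ⬝ᵥ S⁻¹.mulVec u = v ⬝ᵥ u := by rw [hinv, dotProduct_comm]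
  set Q := v ⬝ᵥ u with hQdef
  set P := v ⬝ᵥ w with hPdef
  set R := w ⬝ᵥ S⁻¹.mulVec w with hRdef
  have hexp : (u - w) ⬝ᵥ S⁻¹.mulVec (u - w) = Q - 2 * P + R := by
    rw [Matrix.mulVec_sub, sub_dotProduct, dotProduct_sub,
      dotProduct_sub, hcross, hQ]
    have h1 : w ⬝ᵥ S⁻¹.mulVec u = P := by rw [hinv, dotProduct_comm]
    rw [h1]
    ring
  have hRle : R ≤ (1 + ε) * P := by
    have := (h2 w).2
    rw [hinvhat] at this
    calc R ≤ (1 + ε) * (w ⬝ᵥ v) := this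
      _ = (1 + ε) * P := by rw [dotProduct_comm]
  have hQle : Q ≤ (1 + ε) * P := by
    have := (h1 v).2
    rwa [← hu, ← hw, ← hQdef, ← hPdef] at this
  have hP0 : 0 ≤ P := by
    rcases eq_or_ne v 0 with h | h
    · simp [hPdef, hw, h]
    · exact le_of_lt (by rw [hPdef, hw]; simpa using hShat.dotProduct_mulVec_pos h)
  have hQ0 : 0 ≤ Q := by
    rcases eq_or_ne v 0 with h | h
    · simp [hQdef, hu, h]
    · exact le_of_lt (by rw [hQdef, hu]; simpa using hS.dotProduct_mulVec_pos h)
  have h1ε : (0:ℝ) < 1 - ε := by linarith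
  have hD0 : 0 ≤ (u - w) ⬝ᵥ S⁻¹.mulVec (u - w) := by
    rcases eq_or_ne (u - w) 0 with h | h
    · simp [h]
    · exact le_of_lt (by simpa using hS.inv.dotProduct_mulVec_pos h)
  have hD0' : 0 ≤ Q - 2 * P + R := hexp ▸ hD0
  have hD1 : (Q - 2 * P + R) * (1 + ε) ≤ 2 * ε * Q := by
    nlinarith [mul_le_mul_of_nonneg_left hRle (by linarith : (0:ℝ) ≤ 1 + ε),
      mul_le_mul_of_nonneg_left hQle h1ε.le]
  have hkey : Q - 2 * P + R ≤ 2 * ε / (1 - ε) * Q := by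
    rw [div_mul_eq_mul_div, le_div_iff₀ h1ε]
    nlinarith [mul_nonneg hε0.le hD0']
  have hfinal : (u - w) ⬝ᵥ S⁻¹.mulVec (u - w) ≤ 2 * ε / (1 - ε) * Q := by
    rw [hexp]; exact hkey
  calc Real.sqrt ((u - w) ⬝ᵥ S⁻¹.mulVec (u - w))
      ≤ Real.sqrt (2 * ε / (1 - ε) * Q) := Real.sqrt_le_sqrt hfinal
    _ = Real.sqrt (2 * ε / (1 - ε)) * Real.sqrt Q := by
        rw [Real.sqrt_mul (by positivity)]
    _ = Real.sqrt (2 * ε / (1 - ε)) * Real.sqrt (u ⬝ᵥ S⁻¹.mulVec u) := by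
        rw [hQ, hQdef, dotProduct_comm]
end

section
/- Under the same spectral approximation hypotheses on Σ and Σ̂ (with parameter ε ∈ (0,1)), if vectors g and g̃ satisfy ‖Σg̃ − Σg‖_{Σ⁻¹} ≤ ε′‖Σg‖_{Σ⁻¹} for some ε′ > 0, then ‖Σ̂g̃ − Σ̂g‖_{Σ⁻¹} ≤ ε′·√((1+ε)/(1−ε))·‖Σg‖_{Σ⁻¹}, and consequently ‖Σ̂g̃ − Σg‖_{Σ⁻¹} ≤ (ε′·√((1+ε)/(1−ε)) + √(2ε/(1−ε)))·‖Σg‖_{Σ⁻¹}. -/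
open Matrix

namespace Stmt15Aux

variable {n : ℕ}

lemma dot_symm {M : Matrix (Fin n) (Fin n) ℝ} (hM : M.IsHermitian) (x y : Fin n → ℝ) :
    x ⬝ᵥ M.mulVec y = M.mulVec x ⬝ᵥ y := by
  have ht : Mᵀ = M := Matrix.ext fun i j => by simpa using congrFun (congrFun hM i) j
  rw [Matrix.dotProduct_mulVec, ← Matrix.mulVec_transpose, ht]

lemma dot_nonneg {M : Matrix (Fin n) (Fin n) ℝ} (hM : M.PosSemidef) (x : Fin n → ℝ) :
    0 ≤ x ⬝ᵥ M.mulVec x := by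
  have := hM.dotProduct_mulVec_nonneg x
  simpa using this

open scoped MatrixOrder in
lemma cs {M : Matrix (Fin n) (Fin n) ℝ} (hM : M.PosSemidef) (x y : Fin n → ℝ) :
    (x ⬝ᵥ M.mulVec y) ^ 2 ≤ (x ⬝ᵥ M.mulVec x) * (y ⬝ᵥ M.mulVec y) := by
  set A := CFC.sqrt M with hA
  have hAh : A.IsHermitian := (CFC.sqrt_nonneg M).isSelfAdjoint
  have hfac : ∀ u v : Fin n → ℝ, u ⬝ᵥ M.mulVec v = (A.mulVec u) ⬝ᵥ (A.mulVec v) := by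
    intro u v
    rw [← CFC.sqrt_mul_sqrt_self M hM.nonneg, ← hA, ← Matrix.mulVec_mulVec, dot_symm hAh]
  rw [hfac x y, hfac x x, hfac y y]
  have := Finset.sum_mul_sq_le_sq_mul_sq Finset.univ (A.mulVec x) (A.mulVec y)
  simpa [dotProduct, pow_two] using this

lemma tri {M : Matrix (Fin n) (Fin n) ℝ} (hM : M.PosSemidef) (x y : Fin n → ℝ) :
    Real.sqrt ((x + y) ⬝ᵥ M.mulVec (x + y)) ≤
      Real.sqrt (x ⬝ᵥ M.mulVec x) + Real.sqrt (y ⬝ᵥ M.mulVec y) := by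
  have hx := dot_nonneg hM x
  have hy := dot_nonneg hM y
  have hxy : x ⬝ᵥ M.mulVec y ≤ Real.sqrt (x ⬝ᵥ M.mulVec x) * Real.sqrt (y ⬝ᵥ M.mulVec y) := by
    have h := cs hM x y
    calc x ⬝ᵥ M.mulVec y ≤ |x ⬝ᵥ M.mulVec y| := le_abs_self _
      _ = Real.sqrt ((x ⬝ᵥ M.mulVec y) ^ 2) := (Real.sqrt_sq_eq_abs _).symm
      _ ≤ Real.sqrt ((x ⬝ᵥ M.mulVec x) * (y ⬝ᵥ M.mulVec y)) := Real.sqrt_le_sqrt h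
      _ = _ := Real.sqrt_mul hx _
  have hx2 : Real.sqrt (x ⬝ᵥ M.mulVec x) ^ 2 = x ⬝ᵥ M.mulVec x := Real.sq_sqrt hx
  have hy2 : Real.sqrt (y ⬝ᵥ M.mulVec y) ^ 2 = y ⬝ᵥ M.mulVec y := Real.sq_sqrt hy
  have hexp : (x + y) ⬝ᵥ M.mulVec (x + y) =
      x ⬝ᵥ M.mulVec x + 2 * (x ⬝ᵥ M.mulVec y) + y ⬝ᵥ M.mulVec y := by
    have hsym : y ⬝ᵥ M.mulVec x = x ⬝ᵥ M.mulVec y := by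
      rw [dot_symm hM.1 x y, dotProduct_comm]
    simp [Matrix.mulVec_add, add_dotProduct, dotProduct_add, hsym]
    ring
  calc Real.sqrt ((x + y) ⬝ᵥ M.mulVec (x + y))
      ≤ Real.sqrt ((Real.sqrt (x ⬝ᵥ M.mulVec x) + Real.sqrt (y ⬝ᵥ M.mulVec y)) ^ 2) := by
        apply Real.sqrt_le_sqrt
        rw [hexp]
        nlinarith [hxy, hx2, hy2]
    _ = _ := Real.sqrt_sq (by positivity)

end Stmt15Aux

open Stmt15Aux

/-- Under the spectral approximation hypotheses on `Σ` and `Σ̂`, if `g̃` approximates `g` in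
the sense `‖Σg̃ − Σg‖_{Σ⁻¹} ≤ ε′‖Σg‖_{Σ⁻¹}`, then
`‖Σ̂g̃ − Σ̂g‖_{Σ⁻¹} ≤ ε′√((1+ε)/(1−ε))‖Σg‖_{Σ⁻¹}` and consequently
`‖Σ̂g̃ − Σg‖_{Σ⁻¹} ≤ (ε′√((1+ε)/(1−ε)) + √(2ε/(1−ε)))‖Σg‖_{Σ⁻¹}`. -/
theorem stmt15 {n : ℕ} (S Shat : Matrix (Fin n) (Fin n) ℝ)
    (hS : S.PosDef) (hShat : Shat.PosDef)
    (ε : ℝ) (hε0 : 0 < ε) (hε1 : ε < 1)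
    (h1 : ∀ y : Fin n → ℝ,
      (1 - ε) * (y ⬝ᵥ Shat.mulVec y) ≤ y ⬝ᵥ S.mulVec y ∧
      y ⬝ᵥ S.mulVec y ≤ (1 + ε) * (y ⬝ᵥ Shat.mulVec y))
    (h2 : ∀ y : Fin n → ℝ,
      (1 - ε) * (y ⬝ᵥ Shat⁻¹.mulVec y) ≤ y ⬝ᵥ S⁻¹.mulVec y ∧
      y ⬝ᵥ S⁻¹.mulVec y ≤ (1 + ε) * (y ⬝ᵥ Shat⁻¹.mulVec y))
    (g gt : Fin n → ℝ) (ε' : ℝ) (hε' : 0 < ε')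
    (hg : Real.sqrt ((S.mulVec gt - S.mulVec g) ⬝ᵥ S⁻¹.mulVec (S.mulVec gt - S.mulVec g)) ≤
      ε' * Real.sqrt (S.mulVec g ⬝ᵥ S⁻¹.mulVec (S.mulVec g))) :
    Real.sqrt ((Shat.mulVec gt - Shat.mulVec g) ⬝ᵥ
        S⁻¹.mulVec (Shat.mulVec gt - Shat.mulVec g)) ≤
      ε' * Real.sqrt ((1 + ε) / (1 - ε)) *
        Real.sqrt (S.mulVec g ⬝ᵥ S⁻¹.mulVec (S.mulVec g)) ∧
    Real.sqrt ((Shat.mulVec gt - S.mulVec g) ⬝ᵥ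
        S⁻¹.mulVec (Shat.mulVec gt - S.mulVec g)) ≤
      (ε' * Real.sqrt ((1 + ε) / (1 - ε)) + Real.sqrt (2 * ε / (1 - ε))) *
        Real.sqrt (S.mulVec g ⬝ᵥ S⁻¹.mulVec (S.mulVec g)) := by
  have hεd : 0 < 1 - ε := by linarith
  have hεu : (0:ℝ) < 1 + ε := by linarith
  have hSinv : (S⁻¹).PosDef := hS.inv
  have hShatinv : (Shat⁻¹).PosDef := hShat.inv
  -- key cancellation identities
  have hScancel : ∀ x : Fin n → ℝ, S⁻¹.mulVec (S.mulVec x) = x := by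
    intro x
    rw [Matrix.mulVec_mulVec, Matrix.nonsing_inv_mul S (isUnit_iff_ne_zero.mpr hS.det_pos.ne'), Matrix.one_mulVec]
  have hShatcancel : ∀ x : Fin n → ℝ, Shat⁻¹.mulVec (Shat.mulVec x) = x := by
    intro x
    rw [Matrix.mulVec_mulVec, Matrix.nonsing_inv_mul Shat (isUnit_iff_ne_zero.mpr hShat.det_pos.ne'), Matrix.one_mulVec]
  have hSid : ∀ x : Fin n → ℝ, S.mulVec x ⬝ᵥ S⁻¹.mulVec (S.mulVec x) = x ⬝ᵥ S.mulVec x := by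
    intro x; rw [hScancel, dotProduct_comm]
  have hShatid : ∀ x : Fin n → ℝ,
      Shat.mulVec x ⬝ᵥ Shat⁻¹.mulVec (Shat.mulVec x) = x ⬝ᵥ Shat.mulVec x := by
    intro x; rw [hShatcancel, dotProduct_comm]
  set N := fun x : Fin n → ℝ => Real.sqrt (x ⬝ᵥ S⁻¹.mulVec x) with hN
  have hNg : N (S.mulVec g) = Real.sqrt (g ⬝ᵥ S.mulVec g) := by
    simp only [hN, hSid g]
  have hNgnn : 0 ≤ N (S.mulVec g) := Real.sqrt_nonneg _
  have hsnn : 0 ≤ g ⬝ᵥ S.mulVec g := dot_nonneg hS.posSemidef g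
  -- Step 1 bound: for all x, Q(Shat x) ≤ (1+ε)/(1-ε) * (x ⬝ᵥ S x)
  have step1 : ∀ x : Fin n → ℝ,
      Shat.mulVec x ⬝ᵥ S⁻¹.mulVec (Shat.mulVec x) ≤ ((1 + ε) / (1 - ε)) * (x ⬝ᵥ S.mulVec x) := by
    intro x
    have ha := (h2 (Shat.mulVec x)).2
    rw [hShatid x] at ha
    have hb := (h1 x).1
    have hnn : 0 ≤ x ⬝ᵥ Shat.mulVec x := dot_nonneg hShat.posSemidef x
    rw [div_mul_eq_mul_div, le_div_iff₀ hεd]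
    nlinarith
  have step1N : ∀ x : Fin n → ℝ,
      N (Shat.mulVec x) ≤ Real.sqrt ((1 + ε) / (1 - ε)) * N (S.mulVec x) := by
    intro x
    have h := step1 x
    calc N (Shat.mulVec x) ≤ Real.sqrt (((1 + ε) / (1 - ε)) * (x ⬝ᵥ S.mulVec x)) :=
          Real.sqrt_le_sqrt h
      _ = Real.sqrt ((1 + ε) / (1 - ε)) * Real.sqrt (x ⬝ᵥ S.mulVec x) :=
          Real.sqrt_mul (by positivity) _
      _ = Real.sqrt ((1 + ε) / (1 - ε)) * N (S.mulVec x) := by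
          rw [show N (S.mulVec x) = Real.sqrt (x ⬝ᵥ S.mulVec x) from by simp only [hN, hSid x]]
  -- first conclusion
  have hsub : Shat.mulVec gt - Shat.mulVec g = Shat.mulVec (gt - g) := (Matrix.mulVec_sub _ _ _).symm
  have hsubS : S.mulVec gt - S.mulVec g = S.mulVec (gt - g) := (Matrix.mulVec_sub _ _ _).symm
  have first : N (Shat.mulVec gt - Shat.mulVec g) ≤
      ε' * Real.sqrt ((1 + ε) / (1 - ε)) * N (S.mulVec g) := by
    rw [hsub]
    calc N (Shat.mulVec (gt - g)) ≤ Real.sqrt ((1 + ε) / (1 - ε)) * N (S.mulVec (gt - g)) :=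
          step1N _
      _ ≤ Real.sqrt ((1 + ε) / (1 - ε)) * (ε' * N (S.mulVec g)) := by
          apply mul_le_mul_of_nonneg_left _ (Real.sqrt_nonneg _)
          rw [← hsubS]; exact hg
      _ = ε' * Real.sqrt ((1 + ε) / (1 - ε)) * N (S.mulVec g) := by ring
  refine ⟨first, ?_⟩
  -- Step 2: N (Shat g - S g) ≤ √(2ε/(1-ε)) * N (S g)
  have hQhat : Shat.mulVec g ⬝ᵥ S⁻¹.mulVec (Shat.mulVec g) ≤ (1 + ε) * (g ⬝ᵥ Shat.mulVec g) := by
    have := (h2 (Shat.mulVec g)).2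
    rwa [hShatid g] at this
  have hcross : Shat.mulVec g ⬝ᵥ S⁻¹.mulVec (S.mulVec g) = g ⬝ᵥ Shat.mulVec g := by
    rw [hScancel, dotProduct_comm]
  have hcross2 : S.mulVec g ⬝ᵥ S⁻¹.mulVec (Shat.mulVec g) = g ⬝ᵥ Shat.mulVec g := by
    rw [dot_symm hSinv.1, hScancel]
  have hexp : (Shat.mulVec g - S.mulVec g) ⬝ᵥ S⁻¹.mulVec (Shat.mulVec g - S.mulVec g) =
      Shat.mulVec g ⬝ᵥ S⁻¹.mulVec (Shat.mulVec g) - 2 * (g ⬝ᵥ Shat.mulVec g) +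
        g ⬝ᵥ S.mulVec g := by
    simp only [Matrix.mulVec_sub, sub_dotProduct, dotProduct_sub,
      hcross, hcross2, hSid g]
    ring
  have hlb := (h1 g).1
  have hub := (h1 g).2
  have step2 : (Shat.mulVec g - S.mulVec g) ⬝ᵥ S⁻¹.mulVec (Shat.mulVec g - S.mulVec g) ≤
      (2 * ε / (1 - ε)) * (g ⬝ᵥ S.mulVec g) := by
    rw [hexp, div_mul_eq_mul_div, le_div_iff₀ hεd]
    have hnn : 0 ≤ g ⬝ᵥ Shat.mulVec g := dot_nonneg hShat.posSemidef g
    nlinarith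
  have step2N : N (Shat.mulVec g - S.mulVec g) ≤ Real.sqrt (2 * ε / (1 - ε)) * N (S.mulVec g) := by
    calc N (Shat.mulVec g - S.mulVec g)
        ≤ Real.sqrt ((2 * ε / (1 - ε)) * (g ⬝ᵥ S.mulVec g)) := Real.sqrt_le_sqrt step2
      _ = Real.sqrt (2 * ε / (1 - ε)) * Real.sqrt (g ⬝ᵥ S.mulVec g) :=
          Real.sqrt_mul (by positivity) _
      _ = Real.sqrt (2 * ε / (1 - ε)) * N (S.mulVec g) := by rw [hNg]
  -- triangle inequality
  have htri : N (Shat.mulVec gt - S.mulVec g) ≤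
      N (Shat.mulVec gt - Shat.mulVec g) + N (Shat.mulVec g - S.mulVec g) := by
    have : Shat.mulVec gt - S.mulVec g =
        (Shat.mulVec gt - Shat.mulVec g) + (Shat.mulVec g - S.mulVec g) := by abel
    rw [this]
    exact tri hSinv.posSemidef _ _
  calc N (Shat.mulVec gt - S.mulVec g)
      ≤ N (Shat.mulVec gt - Shat.mulVec g) + N (Shat.mulVec g - S.mulVec g) := htri
    _ ≤ ε' * Real.sqrt ((1 + ε) / (1 - ε)) * N (S.mulVec g) +
        Real.sqrt (2 * ε / (1 - ε)) * N (S.mulVec g) := add_le_add first step2N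
    _ = (ε' * Real.sqrt ((1 + ε) / (1 - ε)) + Real.sqrt (2 * ε / (1 - ε))) * N (S.mulVec g) := by
        ring
end
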